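/- arXiv:1801.06909 — 3 statements merged into one kernel-verified Lean document; each statement's English description precedes it below -/
import Mathlib

section
/- Let O be an even generic type C column sequence (all entries even and all chains generic). Then every O' ∈ Norm(O) is special: whenever an entry c'_{2i} in an even position is odd, one has c'_{2i} = c'_{2i+1}. Moreover, the odd entries of O' occur exactly in chains of O' of length 2 of the form [x, x] with x odd. -/
/-- A type C column sequence: weakly decreasing, even length, and each
consecutive pair `(c_{2i}, c_{2i+1})` has even sum. -/
def TypeC (c : List ℕ) : Prop :=
  Even c.length ∧ c.Chain' (· ≥ ·) ∧
    ∀ i, 2 * i + 1 < c.length → Even (c.getD (2 * i) 0 + c.getD (2 * i + 1) 0)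

/-- A chain `[b_0, b_1, …, b_{2k+1}]`: nonempty, of even length, weakly
decreasing, with `b_{2i-1} = b_{2i}` for `1 ≤ i ≤ k`. -/
def IsChainSeq (b : List ℕ) : Prop :=
  b ≠ [] ∧ Even b.length ∧ b.Chain' (· ≥ ·) ∧
    ∀ i, 2 * i + 2 < b.length → b.getD (2 * i + 1) 0 = b.getD (2 * i + 2) 0

/-- The chain decomposition of a column sequence: cut after each odd
position `2q+1` such that `c_{2q+1} > c_{2q+2}`. -/
def chains : List ℕ → List (List ℕ)
  | a :: b :: rest =>
    match chains rest with
    | [] => [[a, b]]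
    | C :: L => if C.headI < b then [a, b] :: C :: L else (a :: b :: C) :: L
  | _ => []

/-- A chain is generic if it is `[b_0 = b_1]` (length 2 with equal entries)
or has length `≥ 4` and `b_{2i} > b_{2i+1}` for all `i`. -/
def GenericChain (b : List ℕ) : Prop :=
  (b.length = 2 ∧ b.getD 0 0 = b.getD 1 0) ∨
  (4 ≤ b.length ∧ ∀ i, 2 * i + 1 < b.length → b.getD (2 * i + 1) 0 < b.getD (2 * i) 0)

/-- A column sequence is generic if all of its chains are generic. -/
def GenericSeq (c : List ℕ) : Prop := ∀ C ∈ chains c, GenericChain C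

/-- The fundamental degeneration of a quadruple `b_0 ≥ b_1 = b_2 ≥ b_3`. -/
def fundDeg (b0 b1 b2 b3 : ℕ) : ℕ × ℕ × ℕ × ℕ :=
  if b0 = b1 then
    if b2 = b3 then (b0 + 1, b1 + 1, b2 - 1, b3 - 1)
    else (b0 + 1, b1 + 1, b2 - 2, b3)
  else
    if b2 = b3 then (b0, b1 + 2, b2 - 1, b3 - 1)
    else (b0, b1 + 2, b2 - 2, b3)

/-- Replacement of the four consecutive entries at positions
`2i, 2i+1, 2i+2, 2i+3` by their fundamental degeneration, deleting the
last two entries if the two lowered entries both become `0`. -/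
def degenAt (c : List ℕ) (i : ℕ) : List ℕ :=
  let q := fundDeg (c.getD (2 * i) 0) (c.getD (2 * i + 1) 0)
    (c.getD (2 * i + 2) 0) (c.getD (2 * i + 3) 0)
  let c' := c.take (2 * i) ++ [q.1, q.2.1, q.2.2.1, q.2.2.2] ++ c.drop (2 * i + 4)
  if q.2.2.1 = 0 ∧ q.2.2.2 = 0 then c'.dropLast.dropLast else c'

/-- `Norm(O)`: the smallest collection containing `O` and closed under
fundamental degeneration at an interior pair of a chain (the positions
`(2i+1, 2i+2)` carry an interior pair of a chain exactly when the two
entries there are equal). -/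
inductive NormMem (O : List ℕ) : List ℕ → Prop
  | base : NormMem O O
  | step (c : List ℕ) (i : ℕ) : NormMem O c → 2 * i + 3 < c.length →
      c.getD (2 * i + 1) 0 = c.getD (2 * i + 2) 0 → NormMem O (degenAt c i)



namespace NormProof

def gd (c : List ℕ) (p : ℕ) : ℕ := c.getD p 0

lemma gd_cons2 (a b : ℕ) (r : List ℕ) (p : ℕ) : gd (a :: b :: r) (p+2) = gd r p := rfl

lemma gd_drop (l : List ℕ) (m n : ℕ) : gd (l.drop m) n = gd l (m+n) := by
  simp [gd, List.getD_eq_getElem?_getD, List.getElem?_drop]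

lemma gd_take (l : List ℕ) (m n : ℕ) (h : n < m) : gd (l.take m) n = gd l n := by
  simp [gd, List.getD_eq_getElem?_getD, List.getElem?_take, h]

lemma gd_out (c : List ℕ) (p : ℕ) (h : c.length ≤ p) : gd c p = 0 := List.getD_eq_default _ _ h

def Dec (c : List ℕ) : Prop := ∀ p, p + 1 < c.length → gd c (p+1) ≤ gd c p

lemma Dec.mono {c : List ℕ} (h : Dec c) : ∀ p t, p + t < c.length → gd c (p+t) ≤ gd c p := by
  intro p t
  induction t with
  | zero => simp
  | succ t ih =>
    intro hlt
    have h1 : gd c (p+t+1) ≤ gd c (p+t) := h (p+t) (by omega)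
    have h2 : gd c (p+t) ≤ gd c p := ih (by omega)
    have h3 : p + (t+1) = p + t + 1 := by omega
    rw [h3]
    exact le_trans h1 h2

lemma Dec.le {c : List ℕ} (h : Dec c) {p q : ℕ} (hpq : p ≤ q) (hq : q < c.length) :
    gd c q ≤ gd c p := by
  obtain ⟨t, rfl⟩ := Nat.le.dest hpq
  exact h.mono p t hq

def Inv (c : List ℕ) : Prop :=
  Even c.length ∧ Dec c ∧
  (∀ j, 2*j+1 < c.length → (gd c (2*j) % 2 = 1 ∨ gd c (2*j+1) % 2 = 1) →
      gd c (2*j) = gd c (2*j+1) ∧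
      (∀ p, p+1 = 2*j → gd c (2*j) + 2 ≤ gd c p) ∧
      (2*j+2 < c.length → gd c (2*j+2) + 2 ≤ gd c (2*j))) ∧
  (∀ q, 2*q+4 < c.length → gd c (2*q+1) = gd c (2*q+2) → gd c (2*q+2) = gd c (2*q+3) →
      gd c (2*q+3) = gd c (2*q+4) → False) ∧
  (∀ j, 2*j+2 < c.length → gd c (2*j) = gd c (2*j+1) → gd c (2*j+1) = gd c (2*j+2) →
      gd c (2*j) % 2 = 0 → ∀ p, p+1 = 2*j → gd c (2*j) + 3 ≤ gd c p) ∧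
  (∀ q, 2*q+4 < c.length → gd c (2*q+1) = gd c (2*q+2) → gd c (2*q+2) = gd c (2*q+3) →
      gd c (2*q+1) % 2 = 0 → gd c (2*q+4) + 3 ≤ gd c (2*q+1))

lemma degen_spec (c : List ℕ) (i : ℕ) (q : ℕ × ℕ × ℕ × ℕ)
    (hq : q = fundDeg (gd c (2*i)) (gd c (2*i+1)) (gd c (2*i+2)) (gd c (2*i+3)))
    (hi : 2*i+4 ≤ c.length) (hD : Dec c)
    (hz : q.2.2.1 = 0 → q.2.2.2 = 0 → gd c (2*i+3) = 0) :
    (∀ p, p < 2*i → gd (degenAt c i) p = gd c p) ∧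
    gd (degenAt c i) (2*i) = q.1 ∧
    gd (degenAt c i) (2*i+1) = q.2.1 ∧
    gd (degenAt c i) (2*i+2) = q.2.2.1 ∧
    gd (degenAt c i) (2*i+3) = q.2.2.2 ∧
    (∀ p, 2*i+4 ≤ p → gd (degenAt c i) p = gd c p) ∧
    ((q.2.2.1 = 0 ∧ q.2.2.2 = 0) → (degenAt c i).length + 2 = c.length) ∧
    (¬(q.2.2.1 = 0 ∧ q.2.2.2 = 0) → (degenAt c i).length = c.length) := by
  set n := c.length with hnn
  set c' : List ℕ := c.take (2*i) ++ [q.1, q.2.1, q.2.2.1, q.2.2.2] ++ c.drop (2*i+4) with hc'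
  have hlc' : c'.length = n := by
    simp only [hc', List.length_append, List.length_take, List.length_drop, List.length_cons,
      List.length_nil]
    omega
  have hltake : (c.take (2*i)).length = 2*i := by
    rw [List.length_take]; omega
  have hmid : ∀ p, 2*i ≤ p →
      gd c' p = ([q.1, q.2.1, q.2.2.1, q.2.2.2] ++ c.drop (2*i+4)).getD (p - 2*i) 0 := by
    intro p hp
    rw [hc', List.append_assoc]
    show (List.take (2*i) c ++ _).getD p 0 = _
    rw [List.getD_append_right _ _ _ _ (by rw [hltake]; omega), hltake]
  have hA : ∀ p, p < 2*i → gd c' p = gd c p := by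
    intro p hp
    rw [hc', List.append_assoc]
    show (List.take (2*i) c ++ _).getD p 0 = gd c p
    rw [List.getD_append _ _ _ _ (by rw [hltake]; omega)]
    exact gd_take c (2*i) p hp
  have hB0 : gd c' (2*i) = q.1 := by
    rw [hmid _ (le_refl _), Nat.sub_self]; rfl
  have hB1 : gd c' (2*i+1) = q.2.1 := by
    rw [hmid _ (by omega), show 2*i+1-2*i = 1 from by omega]; rfl
  have hB2 : gd c' (2*i+2) = q.2.2.1 := by
    rw [hmid _ (by omega), show 2*i+2-2*i = 2 from by omega]; rfl
  have hB3 : gd c' (2*i+3) = q.2.2.2 := by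
    rw [hmid _ (by omega), show 2*i+3-2*i = 3 from by omega]; rfl
  have hC : ∀ p, 2*i+4 ≤ p → gd c' p = gd c p := by
    intro p hp
    rw [hmid _ (by omega)]
    rw [List.getD_append_right _ _ _ _ (by simp; omega)]
    simp only [List.length_cons, List.length_nil]
    have h5 := gd_drop c (2*i+4) (p - 2*i - 4)
    rw [show 2*i+4 + (p - 2*i - 4) = p from by omega] at h5
    exact h5
  have hdef : degenAt c i = if q.2.2.1 = 0 ∧ q.2.2.2 = 0 then c'.dropLast.dropLast else c' := by
    have hq' : q = fundDeg (c.getD (2*i) 0) (c.getD (2*i+1) 0) (c.getD (2*i+2) 0)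
        (c.getD (2*i+3) 0) := hq
    rw [degenAt, ← hq', ← hc']
  by_cases hdel : q.2.2.1 = 0 ∧ q.2.2.2 = 0
  · have hd : degenAt c i = c'.take (n - 2) := by
      rw [hdef, if_pos hdel, List.dropLast_eq_take, List.dropLast_eq_take, List.take_take,
        List.length_take, hlc']
      congr 1
      omega
    have hb3 : gd c (2*i+3) = 0 := hz hdel.1 hdel.2
    have hlen : (degenAt c i).length = n - 2 := by
      rw [hd, List.length_take, hlc']; omega
    have htail : ∀ p, 2*i+3 ≤ p → gd c p = 0 := by
      intro p hp
      by_cases hpn : p < n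
      · have := hD.le hp hpn
        omega
      · exact gd_out _ _ (by omega)
    have hgdd : ∀ p, p < n - 2 → gd (degenAt c i) p = gd c' p := by
      intro p hp
      rw [hd]
      exact gd_take c' (n-2) p hp
    have hgdd0 : ∀ p, n - 2 ≤ p → gd (degenAt c i) p = 0 := by
      intro p hp
      exact gd_out _ _ (by omega)
    refine ⟨?_, ?_, ?_, ?_, ?_, ?_, fun _ => by omega, fun h => absurd hdel h⟩
    · intro p hp; rw [hgdd p (by omega), hA p hp]
    · rw [hgdd _ (by omega), hB0]
    · rw [hgdd _ (by omega), hB1]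
    · by_cases h2 : 2*i+2 < n-2
      · rw [hgdd _ h2, hB2]
      · rw [hgdd0 _ (by omega), hdel.1]
    · by_cases h2 : 2*i+3 < n-2
      · rw [hgdd _ h2, hB3]
      · rw [hgdd0 _ (by omega), hdel.2]
    · intro p hp
      by_cases h2 : p < n-2
      · rw [hgdd _ h2, hC p hp]
      · rw [hgdd0 _ (by omega), htail p (by omega)]
  · have hd : degenAt c i = c' := by rw [hdef, if_neg hdel]
    rw [hd]
    exact ⟨hA, hB0, hB1, hB2, hB3, hC, fun h => absurd h hdel, fun _ => hlc'⟩

set_option maxHeartbeats 4000000 in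

lemma inv_step (c : List ℕ) (i : ℕ) (hInv : Inv c) (hi : 2*i+3 < c.length)
    (hvv : c.getD (2*i+1) 0 = c.getD (2*i+2) 0) : Inv (degenAt c i) := by
  obtain ⟨hL, hD, hO, hR, hT1, hT2⟩ := hInv
  set n := c.length with hnn
  have hvv' : gd c (2*i+1) = gd c (2*i+2) := hvv
  have hn4 : 2*i+4 ≤ n := by omega
  have hnE : n % 2 = 0 := Nat.even_iff.1 hL
  -- evenness of the four entries
  have heOi : ¬(gd c (2*i) % 2 = 1 ∨ gd c (2*i+1) % 2 = 1) := by
    intro h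
    obtain ⟨w1, _, w3⟩ := hO i (by omega) h
    have := w3 (by omega)
    omega
  have heOi' : ¬(gd c (2*i+2) % 2 = 1 ∨ gd c (2*i+3) % 2 = 1) := by
    intro h
    obtain ⟨w1, w2, _⟩ := hO (i+1) (show 2*(i+1)+1 < n by omega)
      (show gd c (2*(i+1)) % 2 = 1 ∨ gd c (2*(i+1)+1) % 2 = 1 from h)
    have := w2 (2*i+1) (show 2*i+1+1 = 2*(i+1) by omega)
    have hw : gd c (2*i+2) + 2 ≤ gd c (2*i+1) := this
    omega
  have he0 : gd c (2*i) % 2 = 0 := by omega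
  have he1 : gd c (2*i+1) % 2 = 0 := by omega
  have he3 : gd c (2*i+3) % 2 = 0 := by omega
  have hb0 : gd c (2*i+1) ≤ gd c (2*i) := hD (2*i) (by omega)
  have hb3 : gd c (2*i+3) ≤ gd c (2*i+2) := hD (2*i+2) (by omega)
  rcases eq_or_ne (gd c (2*i)) (gd c (2*i+1)) with hE1 | hE1
  · rcases eq_or_ne (gd c (2*i+2)) (gd c (2*i+3)) with hE2 | hE2
    ·
      have hq : ((gd c (2*i) + 1, gd c (2*i+1) + 1, gd c (2*i+2) - 1, gd c (2*i+3) - 1) : ℕ×ℕ×ℕ×ℕ)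
          = fundDeg (gd c (2*i)) (gd c (2*i+1)) (gd c (2*i+2)) (gd c (2*i+3)) := by
        rw [fundDeg, if_pos hE1, if_pos hE2]
      obtain ⟨hLT, h0, h1, h2, h3, hGE, hDel, hKeep⟩ :=
        degen_spec c i _ hq hn4 hD
          (fun (_ : gd c (2*i+2) - 1 = 0) (h4c : gd c (2*i+3) - 1 = 0) => by omega)
      have h0' : gd (degenAt c i) (2*i) = gd c (2*i) + 1 := h0
      have h1' : gd (degenAt c i) (2*i+1) = gd c (2*i+1) + 1 := h1
      have h2' : gd (degenAt c i) (2*i+2) = gd c (2*i+2) - 1 := h2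
      have h3' : gd (degenAt c i) (2*i+3) = gd c (2*i+3) - 1 := h3
      have hm : (degenAt c i).length + 2 = n ∨ (degenAt c i).length = n := by
        by_cases hcc : gd c (2*i+2) - 1 = 0 ∧ gd c (2*i+3) - 1 = 0
        · exact Or.inl (hDel hcc)
        · exact Or.inr (hKeep hcc)
      have hT1i : ∀ p, p+1 = 2*i → gd c (2*i) + 3 ≤ gd c p := hT1 i (by omega) hE1 hvv' he0
      have hv3 : gd c (2*i+3) = gd c (2*i+1) := by omega
      have hT2i : 2*i+4 < n → gd c (2*i+4) + 3 ≤ gd c (2*i+1) := fun hh =>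
        hT2 i hh hvv' hE2 he1
      have hmv0 : gd c (2*i+1) = 0 → (degenAt c i).length = 2*i+2 := by
        intro h0v
        have hnd : 2*i+4 = n := by
          by_contra hne
          have := hT2i (by omega)
          omega
        have hk3 : gd c (2*i+2) - 1 = 0 := by omega
        have hk4 : gd c (2*i+3) - 1 = 0 := by omega
        have := hDel ⟨hk3, hk4⟩
        omega
      refine ⟨Nat.even_iff.2 (by omega), ?_, ?_, ?_, ?_, ?_⟩
      · -- Dec
        intro p hp
        have hpn : p+1 < n := by omega
        rcases (by omega : p+1 < 2*i ∨ p+1 = 2*i ∨ p = 2*i ∨ p = 2*i+1 ∨ p = 2*i+2 ∨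
            p = 2*i+3 ∨ 2*i+4 ≤ p) with h|h|h|h|h|h|h
        · rw [hLT (p+1) (by omega), hLT p (by omega)]; exact hD p hpn
        · rw [show p+1 = 2*i from h, h0', hLT p (by omega)]
          have w := hT1i p h
          omega
        · rw [show p = 2*i from h, h1', h0']; omega
        · rw [show p = 2*i+1 from h, h2', h1']; omega
        · rw [show p = 2*i+2 from h, h3', h2']; omega
        · rw [show p = 2*i+3 from h, h3', hGE (2*i+3+1) (by omega)]
          show gd c (2*i+4) ≤ gd c (2*i+3) - 1
          have w := hT2i (by omega)
          omega
        · rw [hGE (p+1) (by omega), hGE p (by omega)]; exact hD p hpn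
      · -- O
        intro j hj hodd
        rcases (by omega : 2*j+2 ≤ 2*i ∨ 2*j = 2*i ∨ 2*j = 2*i+2 ∨ 2*j = 2*i+4 ∨
            2*i+6 ≤ 2*j) with h|h|h|h|h
        · rw [hLT (2*j) (by omega), hLT (2*j+1) (by omega)] at hodd
          obtain ⟨w1, w2, w3⟩ := hO j (by omega) hodd
          refine ⟨by rw [hLT (2*j) (by omega), hLT (2*j+1) (by omega)]; exact w1, ?_, ?_⟩
          · intro p hp
            rw [hLT (2*j) (by omega), hLT p (by omega)]
            exact w2 p hp
          · intro hg2
            have w3' := w3 (by omega)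
            rcases (by omega : 2*j+2 < 2*i ∨ 2*j+2 = 2*i) with hb | hb
            · rw [hLT (2*j+2) hb, hLT (2*j) (by omega)]; exact w3'
            · have o : gd (degenAt c i) (2*j+2) = gd c (2*i) + 1 := by
                rw [show 2*j+2 = 2*i from hb]; exact h0'
              rw [o, hLT (2*j) (by omega)]
              have w := hT1i (2*j+1) (by omega)
              omega
        · have o1 : gd (degenAt c i) (2*j) = gd c (2*i) + 1 := by
            rw [show 2*j = 2*i from h]; exact h0'
          have o2 : gd (degenAt c i) (2*j+1) = gd c (2*i+1) + 1 := by
            rw [show 2*j+1 = 2*i+1 from by omega]; exact h1'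
          refine ⟨by rw [o1, o2]; omega, ?_, ?_⟩
          · intro p hp
            rw [o1, hLT p (by omega)]
            have w := hT1i p (by omega)
            omega
          · intro hg2
            have o3 : gd (degenAt c i) (2*j+2) = gd c (2*i+2) - 1 := by
              rw [show 2*j+2 = 2*i+2 from by omega]; exact h2'
            rw [o3, o1]
            by_cases hv0 : gd c (2*i+1) = 0
            · have := hmv0 hv0
              omega
            · omega
        · have o1 : gd (degenAt c i) (2*j) = gd c (2*i+2) - 1 := by
            rw [show 2*j = 2*i+2 from h]; exact h2'
          have o2 : gd (degenAt c i) (2*j+1) = gd c (2*i+3) - 1 := by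
            rw [show 2*j+1 = 2*i+3 from by omega]; exact h3'
          refine ⟨by rw [o1, o2]; omega, ?_, ?_⟩
          · intro p hp
            have op : gd (degenAt c i) p = gd c (2*i+1) + 1 := by
              rw [show p = 2*i+1 from by omega]; exact h1'
            rw [o1, op]
            omega
          · intro hg2
            have o3 : gd (degenAt c i) (2*j+2) = gd c (2*j+2) := hGE (2*j+2) (by omega)
            rw [o3, o1]
            have w := hT2i (by omega)
            have e5 : gd c (2*j+2) = gd c (2*i+4) := by rw [show 2*j+2 = 2*i+4 from by omega]
            omega
        · have o1 : gd (degenAt c i) (2*j) = gd c (2*j) := hGE (2*j) (by omega)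
          have o2 : gd (degenAt c i) (2*j+1) = gd c (2*j+1) := hGE (2*j+1) (by omega)
          rw [o1, o2] at hodd
          obtain ⟨w1, w2, w3⟩ := hO j (by omega) hodd
          refine ⟨by rw [o1, o2]; exact w1, ?_, ?_⟩
          · intro p hp
            have hp' : p = 2*i+3 := by omega
            have w2' := w2 p hp
            rw [hp'] at w2'
            rw [o1, hp', h3']
            omega
          · intro hg2
            rw [o1, hGE (2*j+2) (by omega)]
            exact w3 (by omega)
        · have o1 : gd (degenAt c i) (2*j) = gd c (2*j) := hGE (2*j) (by omega)
          have o2 : gd (degenAt c i) (2*j+1) = gd c (2*j+1) := hGE (2*j+1) (by omega)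
          rw [o1, o2] at hodd
          obtain ⟨w1, w2, w3⟩ := hO j (by omega) hodd
          refine ⟨by rw [o1, o2]; exact w1, ?_, ?_⟩
          · intro p hp
            rw [o1, hGE p (by omega)]
            exact w2 p hp
          · intro hg2
            rw [o1, hGE (2*j+2) (by omega)]
            exact w3 (by omega)
      · -- R
        intro qq hq4 e1 e2 e3
        rcases (by omega : 2*qq+4 < 2*i ∨ 2*qq+4 = 2*i ∨ 2*qq+2 = 2*i ∨ 2*qq = 2*i ∨
            2*qq = 2*i+2 ∨ 2*i+4 ≤ 2*qq) with h|h|h|h|h|h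
        · rw [hLT (2*qq+1) (by omega), hLT (2*qq+2) (by omega)] at e1
          rw [hLT (2*qq+2) (by omega), hLT (2*qq+3) (by omega)] at e2
          rw [hLT (2*qq+3) (by omega), hLT (2*qq+4) (by omega)] at e3
          exact hR qq (by omega) e1 e2 e3
        · rw [hLT (2*qq+1) (by omega), hLT (2*qq+2) (by omega)] at e1
          rw [hLT (2*qq+2) (by omega), hLT (2*qq+3) (by omega)] at e2
          have o4 : gd (degenAt c i) (2*qq+4) = gd c (2*i) + 1 := by
            rw [show 2*qq+4 = 2*i from h]; exact h0'
          rw [hLT (2*qq+3) (by omega), o4] at e3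
          have hoddq : gd c (2*qq+2) % 2 = 1 := by omega
          obtain ⟨w1, w2, w3⟩ := hO (qq+1) (by omega : 2*(qq+1)+1 < n) (Or.inl hoddq)
          have w3' : gd c (2*qq+4) + 2 ≤ gd c (2*qq+2) := w3 (by omega)
          have e5 : gd c (2*qq+4) = gd c (2*i) := by rw [show 2*qq+4 = 2*i from h]
          omega
        · have o3 : gd (degenAt c i) (2*qq+3) = gd c (2*i+1) + 1 := by
            rw [show 2*qq+3 = 2*i+1 from by omega]; exact h1'
          have o4 : gd (degenAt c i) (2*qq+4) = gd c (2*i+2) - 1 := by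
            rw [show 2*qq+4 = 2*i+2 from by omega]; exact h2'
          rw [o3, o4] at e3
          omega
        · have o1 : gd (degenAt c i) (2*qq+1) = gd c (2*i+1) + 1 := by
            rw [show 2*qq+1 = 2*i+1 from by omega]; exact h1'
          have o2 : gd (degenAt c i) (2*qq+2) = gd c (2*i+2) - 1 := by
            rw [show 2*qq+2 = 2*i+2 from by omega]; exact h2'
          rw [o1, o2] at e1
          omega
        · have o1 : gd (degenAt c i) (2*qq+1) = gd c (2*i+3) - 1 := by
            rw [show 2*qq+1 = 2*i+3 from by omega]; exact h3'
          have o2 : gd (degenAt c i) (2*qq+2) = gd c (2*qq+2) := hGE (2*qq+2) (by omega)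
          rw [o1, o2] at e1
          have e5 : gd c (2*qq+2) = gd c (2*i+4) := by rw [show 2*qq+2 = 2*i+4 from by omega]
          by_cases hv0 : gd c (2*i+1) = 0
          · have := hmv0 hv0
            omega
          · have w := hT2i (by omega)
            omega
        · rw [hGE (2*qq+1) (by omega), hGE (2*qq+2) (by omega)] at e1
          rw [hGE (2*qq+2) (by omega), hGE (2*qq+3) (by omega)] at e2
          rw [hGE (2*qq+3) (by omega), hGE (2*qq+4) (by omega)] at e3
          exact hR qq (by omega) e1 e2 e3
      · -- T1
        intro j hj e1 e2 hpar p hp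
        rcases (by omega : 2*j+2 < 2*i ∨ 2*j+2 = 2*i ∨ 2*j = 2*i ∨ 2*j = 2*i+2 ∨
            2*j = 2*i+4 ∨ 2*i+6 ≤ 2*j) with h|h|h|h|h|h
        · rw [hLT (2*j) (by omega), hLT (2*j+1) (by omega)] at e1
          rw [hLT (2*j+1) (by omega), hLT (2*j+2) (by omega)] at e2
          rw [hLT (2*j) (by omega)] at hpar
          rw [hLT (2*j) (by omega), hLT p (by omega)]
          exact hT1 j (by omega) e1 e2 hpar p hp
        · have o2 : gd (degenAt c i) (2*j+2) = gd c (2*i) + 1 := by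
            rw [show 2*j+2 = 2*i from h]; exact h0'
          rw [hLT (2*j) (by omega), hLT (2*j+1) (by omega)] at e1
          rw [hLT (2*j+1) (by omega), o2] at e2
          rw [hLT (2*j) (by omega)] at hpar
          omega
        · have o2 : gd (degenAt c i) (2*j+1) = gd c (2*i+1) + 1 := by
            rw [show 2*j+1 = 2*i+1 from by omega]; exact h1'
          have o3 : gd (degenAt c i) (2*j+2) = gd c (2*i+2) - 1 := by
            rw [show 2*j+2 = 2*i+2 from by omega]; exact h2'
          rw [o2, o3] at e2
          omega
        · have o1 : gd (degenAt c i) (2*j) = gd c (2*i+2) - 1 := by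
            rw [show 2*j = 2*i+2 from h]; exact h2'
          rw [o1] at hpar
          by_cases hv0 : gd c (2*i+1) = 0
          · have := hmv0 hv0
            omega
          · omega
        · have o1 : gd (degenAt c i) (2*j) = gd c (2*j) := hGE (2*j) (by omega)
          have o2 : gd (degenAt c i) (2*j+1) = gd c (2*j+1) := hGE (2*j+1) (by omega)
          have o3 : gd (degenAt c i) (2*j+2) = gd c (2*j+2) := hGE (2*j+2) (by omega)
          have op : gd (degenAt c i) p = gd c (2*i+3) - 1 := by
            rw [show p = 2*i+3 from by omega]; exact h3'
          rw [o1, o2] at e1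
          rw [o2, o3] at e2
          rw [o1] at hpar
          have w := hT1 j (by omega) e1 e2 hpar (2*i+3) (by omega)
          rw [o1, op]
          omega
        · rw [hGE (2*j) (by omega), hGE (2*j+1) (by omega)] at e1
          rw [hGE (2*j+1) (by omega), hGE (2*j+2) (by omega)] at e2
          rw [hGE (2*j) (by omega)] at hpar
          rw [hGE (2*j) (by omega), hGE p (by omega)]
          exact hT1 j (by omega) e1 e2 hpar p hp
      · -- T2
        intro qq hq4 e1 e2 hpar
        rcases (by omega : 2*qq+4 < 2*i ∨ 2*qq+4 = 2*i ∨ 2*qq+2 = 2*i ∨ 2*qq = 2*i ∨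
            2*qq = 2*i+2 ∨ 2*i+4 ≤ 2*qq) with h|h|h|h|h|h
        · rw [hLT (2*qq+1) (by omega), hLT (2*qq+2) (by omega)] at e1
          rw [hLT (2*qq+2) (by omega), hLT (2*qq+3) (by omega)] at e2
          rw [hLT (2*qq+1) (by omega)] at hpar
          rw [hLT (2*qq+4) (by omega), hLT (2*qq+1) (by omega)]
          exact hT2 qq (by omega) e1 e2 hpar
        · have o4 : gd (degenAt c i) (2*qq+4) = gd c (2*i) + 1 := by
            rw [show 2*qq+4 = 2*i from h]; exact h0'
          rw [hLT (2*qq+1) (by omega), hLT (2*qq+2) (by omega)] at e1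
          rw [hLT (2*qq+2) (by omega), hLT (2*qq+3) (by omega)] at e2
          rw [hLT (2*qq+1) (by omega)] at hpar
          have w := hT2 qq (by omega) e1 e2 hpar
          have e5 : gd c (2*qq+4) = gd c (2*i) := by rw [show 2*qq+4 = 2*i from h]
          rw [o4, hLT (2*qq+1) (by omega)]
          omega
        · have o1 : gd (degenAt c i) (2*qq+1) = gd c (2*qq+1) := hLT (2*qq+1) (by omega)
          have o2 : gd (degenAt c i) (2*qq+2) = gd c (2*i) + 1 := by
            rw [show 2*qq+2 = 2*i from h]; exact h0'
          rw [o1, o2] at e1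
          rw [o1] at hpar
          omega
        · have o1 : gd (degenAt c i) (2*qq+1) = gd c (2*i+1) + 1 := by
            rw [show 2*qq+1 = 2*i+1 from by omega]; exact h1'
          have o2 : gd (degenAt c i) (2*qq+2) = gd c (2*i+2) - 1 := by
            rw [show 2*qq+2 = 2*i+2 from by omega]; exact h2'
          rw [o1, o2] at e1
          omega
        · have o1 : gd (degenAt c i) (2*qq+1) = gd c (2*i+3) - 1 := by
            rw [show 2*qq+1 = 2*i+3 from by omega]; exact h3'
          rw [o1] at hpar
          by_cases hv0 : gd c (2*i+1) = 0
          · have := hmv0 hv0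
            omega
          · omega
        · rw [hGE (2*qq+1) (by omega), hGE (2*qq+2) (by omega)] at e1
          rw [hGE (2*qq+2) (by omega), hGE (2*qq+3) (by omega)] at e2
          rw [hGE (2*qq+1) (by omega)] at hpar
          rw [hGE (2*qq+4) (by omega), hGE (2*qq+1) (by omega)]
          exact hT2 qq (by omega) e1 e2 hpar
    ·
      have hq : ((gd c (2*i) + 1, gd c (2*i+1) + 1, gd c (2*i+2) - 2, gd c (2*i+3)) : ℕ×ℕ×ℕ×ℕ)
          = fundDeg (gd c (2*i)) (gd c (2*i+1)) (gd c (2*i+2)) (gd c (2*i+3)) := by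
        rw [fundDeg, if_pos hE1, if_neg hE2]
      obtain ⟨hLT, h0, h1, h2, h3, hGE, hDel, hKeep⟩ :=
        degen_spec c i _ hq hn4 hD (fun _ h4 => h4)
      have h0' : gd (degenAt c i) (2*i) = gd c (2*i) + 1 := h0
      have h1' : gd (degenAt c i) (2*i+1) = gd c (2*i+1) + 1 := h1
      have h2' : gd (degenAt c i) (2*i+2) = gd c (2*i+2) - 2 := h2
      have h3' : gd (degenAt c i) (2*i+3) = gd c (2*i+3) := h3
      have hm : (degenAt c i).length + 2 = n ∨ (degenAt c i).length = n := by
        by_cases hcc : gd c (2*i+2) - 2 = 0 ∧ gd c (2*i+3) = 0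
        · exact Or.inl (hDel hcc)
        · exact Or.inr (hKeep hcc)
      have hT1i : ∀ p, p+1 = 2*i → gd c (2*i) + 3 ≤ gd c p := hT1 i (by omega) hE1 hvv' he0
      have hs2 : gd c (2*i+3) + 2 ≤ gd c (2*i+1) := by omega
      refine ⟨Nat.even_iff.2 (by omega), ?_, ?_, ?_, ?_, ?_⟩
      · -- Dec
        intro p hp
        have hpn : p+1 < n := by omega
        rcases (by omega : p+1 < 2*i ∨ p+1 = 2*i ∨ p = 2*i ∨ p = 2*i+1 ∨ p = 2*i+2 ∨
            p = 2*i+3 ∨ 2*i+4 ≤ p) with h|h|h|h|h|h|h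
        · rw [hLT (p+1) (by omega), hLT p (by omega)]; exact hD p hpn
        · rw [show p+1 = 2*i from h, h0', hLT p (by omega)]
          have w := hT1i p h
          omega
        · rw [show p = 2*i from h, h1', h0']; omega
        · rw [show p = 2*i+1 from h, h2', h1']; omega
        · rw [show p = 2*i+2 from h, h3', h2']; omega
        · rw [show p = 2*i+3 from h, h3', hGE (2*i+3+1) (by omega)]
          exact hD (2*i+3) (by omega)
        · rw [hGE (p+1) (by omega), hGE p (by omega)]; exact hD p hpn
      · -- O
        intro j hj hodd
        rcases (by omega : 2*j+2 ≤ 2*i ∨ 2*j = 2*i ∨ 2*j = 2*i+2 ∨ 2*j = 2*i+4 ∨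
            2*i+6 ≤ 2*j) with h|h|h|h|h
        · rw [hLT (2*j) (by omega), hLT (2*j+1) (by omega)] at hodd
          obtain ⟨w1, w2, w3⟩ := hO j (by omega) hodd
          refine ⟨by rw [hLT (2*j) (by omega), hLT (2*j+1) (by omega)]; exact w1, ?_, ?_⟩
          · intro p hp
            rw [hLT (2*j) (by omega), hLT p (by omega)]
            exact w2 p hp
          · intro hg2
            have w3' := w3 (by omega)
            rcases (by omega : 2*j+2 < 2*i ∨ 2*j+2 = 2*i) with hb | hb
            · rw [hLT (2*j+2) hb, hLT (2*j) (by omega)]; exact w3'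
            · have o : gd (degenAt c i) (2*j+2) = gd c (2*i) + 1 := by
                rw [show 2*j+2 = 2*i from hb]; exact h0'
              rw [o, hLT (2*j) (by omega)]
              have w := hT1i (2*j+1) (by omega)
              omega
        · have o1 : gd (degenAt c i) (2*j) = gd c (2*i) + 1 := by
            rw [show 2*j = 2*i from h]; exact h0'
          have o2 : gd (degenAt c i) (2*j+1) = gd c (2*i+1) + 1 := by
            rw [show 2*j+1 = 2*i+1 from by omega]; exact h1'
          refine ⟨by rw [o1, o2]; omega, ?_, ?_⟩
          · intro p hp
            rw [o1, hLT p (by omega)]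
            have w := hT1i p (by omega)
            omega
          · intro hg2
            have o3 : gd (degenAt c i) (2*j+2) = gd c (2*i+2) - 2 := by
              rw [show 2*j+2 = 2*i+2 from by omega]; exact h2'
            rw [o3, o1]
            omega
        · have o1 : gd (degenAt c i) (2*j) = gd c (2*i+2) - 2 := by
            rw [show 2*j = 2*i+2 from h]; exact h2'
          have o2 : gd (degenAt c i) (2*j+1) = gd c (2*i+3) := by
            rw [show 2*j+1 = 2*i+3 from by omega]; exact h3'
          rw [o1, o2] at hodd
          exact absurd hodd (by omega)
        · have o1 : gd (degenAt c i) (2*j) = gd c (2*j) := hGE (2*j) (by omega)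
          have o2 : gd (degenAt c i) (2*j+1) = gd c (2*j+1) := hGE (2*j+1) (by omega)
          rw [o1, o2] at hodd
          obtain ⟨w1, w2, w3⟩ := hO j (by omega) hodd
          refine ⟨by rw [o1, o2]; exact w1, ?_, ?_⟩
          · intro p hp
            have hp' : p = 2*i+3 := by omega
            have w2' := w2 p hp
            rw [hp'] at w2'
            rw [o1, hp', h3']
            exact w2'
          · intro hg2
            rw [o1, hGE (2*j+2) (by omega)]
            exact w3 (by omega)
        · have o1 : gd (degenAt c i) (2*j) = gd c (2*j) := hGE (2*j) (by omega)
          have o2 : gd (degenAt c i) (2*j+1) = gd c (2*j+1) := hGE (2*j+1) (by omega)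
          rw [o1, o2] at hodd
          obtain ⟨w1, w2, w3⟩ := hO j (by omega) hodd
          refine ⟨by rw [o1, o2]; exact w1, ?_, ?_⟩
          · intro p hp
            rw [o1, hGE p (by omega)]
            exact w2 p hp
          · intro hg2
            rw [o1, hGE (2*j+2) (by omega)]
            exact w3 (by omega)
      · -- R
        intro qq hq4 e1 e2 e3
        rcases (by omega : 2*qq+4 < 2*i ∨ 2*qq+4 = 2*i ∨ 2*qq+2 = 2*i ∨ 2*qq = 2*i ∨
            2*qq = 2*i+2 ∨ 2*i+4 ≤ 2*qq) with h|h|h|h|h|h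
        · rw [hLT (2*qq+1) (by omega), hLT (2*qq+2) (by omega)] at e1
          rw [hLT (2*qq+2) (by omega), hLT (2*qq+3) (by omega)] at e2
          rw [hLT (2*qq+3) (by omega), hLT (2*qq+4) (by omega)] at e3
          exact hR qq (by omega) e1 e2 e3
        · rw [hLT (2*qq+1) (by omega), hLT (2*qq+2) (by omega)] at e1
          rw [hLT (2*qq+2) (by omega), hLT (2*qq+3) (by omega)] at e2
          have o4 : gd (degenAt c i) (2*qq+4) = gd c (2*i) + 1 := by
            rw [show 2*qq+4 = 2*i from h]; exact h0'
          rw [hLT (2*qq+3) (by omega), o4] at e3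
          have hoddq : gd c (2*qq+2) % 2 = 1 := by omega
          obtain ⟨w1, w2, w3⟩ := hO (qq+1) (by omega : 2*(qq+1)+1 < n) (Or.inl hoddq)
          have w3' : gd c (2*qq+4) + 2 ≤ gd c (2*qq+2) := w3 (by omega)
          have e5 : gd c (2*qq+4) = gd c (2*i) := by rw [show 2*qq+4 = 2*i from h]
          omega
        · have o2 : gd (degenAt c i) (2*qq+2) = gd c (2*i) + 1 := by
            rw [show 2*qq+2 = 2*i from h]; exact h0'
          have o3 : gd (degenAt c i) (2*qq+3) = gd c (2*i+1) + 1 := by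
            rw [show 2*qq+3 = 2*i+1 from by omega]; exact h1'
          have o4 : gd (degenAt c i) (2*qq+4) = gd c (2*i+2) - 2 := by
            rw [show 2*qq+4 = 2*i+2 from by omega]; exact h2'
          rw [o3, o4] at e3
          omega
        · have o1 : gd (degenAt c i) (2*qq+1) = gd c (2*i+1) + 1 := by
            rw [show 2*qq+1 = 2*i+1 from by omega]; exact h1'
          have o2 : gd (degenAt c i) (2*qq+2) = gd c (2*i+2) - 2 := by
            rw [show 2*qq+2 = 2*i+2 from by omega]; exact h2'
          rw [o1, o2] at e1
          omega
        · have o1 : gd (degenAt c i) (2*qq+1) = gd c (2*qq+1) := by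
            rw [show 2*qq+1 = 2*i+3 from by omega, h3']
          have o2 : gd (degenAt c i) (2*qq+2) = gd c (2*qq+2) := hGE (2*qq+2) (by omega)
          have o3 : gd (degenAt c i) (2*qq+3) = gd c (2*qq+3) := hGE (2*qq+3) (by omega)
          have o4 : gd (degenAt c i) (2*qq+4) = gd c (2*qq+4) := hGE (2*qq+4) (by omega)
          rw [o1, o2] at e1
          rw [o2, o3] at e2
          rw [o3, o4] at e3
          exact hR qq (by omega) e1 e2 e3
        · rw [hGE (2*qq+1) (by omega), hGE (2*qq+2) (by omega)] at e1
          rw [hGE (2*qq+2) (by omega), hGE (2*qq+3) (by omega)] at e2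
          rw [hGE (2*qq+3) (by omega), hGE (2*qq+4) (by omega)] at e3
          exact hR qq (by omega) e1 e2 e3
      · -- T1
        intro j hj e1 e2 hpar p hp
        rcases (by omega : 2*j+2 < 2*i ∨ 2*j+2 = 2*i ∨ 2*j = 2*i ∨ 2*j = 2*i+2 ∨
            2*j = 2*i+4 ∨ 2*i+6 ≤ 2*j) with h|h|h|h|h|h
        · rw [hLT (2*j) (by omega), hLT (2*j+1) (by omega)] at e1
          rw [hLT (2*j+1) (by omega), hLT (2*j+2) (by omega)] at e2
          rw [hLT (2*j) (by omega)] at hpar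
          rw [hLT (2*j) (by omega), hLT p (by omega)]
          exact hT1 j (by omega) e1 e2 hpar p hp
        · have o2 : gd (degenAt c i) (2*j+2) = gd c (2*i) + 1 := by
            rw [show 2*j+2 = 2*i from h]; exact h0'
          rw [hLT (2*j) (by omega), hLT (2*j+1) (by omega)] at e1
          rw [hLT (2*j+1) (by omega), o2] at e2
          rw [hLT (2*j) (by omega)] at hpar
          omega
        · have o2 : gd (degenAt c i) (2*j+1) = gd c (2*i+1) + 1 := by
            rw [show 2*j+1 = 2*i+1 from by omega]; exact h1'
          have o3 : gd (degenAt c i) (2*j+2) = gd c (2*i+2) - 2 := by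
            rw [show 2*j+2 = 2*i+2 from by omega]; exact h2'
          rw [o2, o3] at e2
          omega
        · have o1 : gd (degenAt c i) (2*j) = gd c (2*i+2) - 2 := by
            rw [show 2*j = 2*i+2 from h]; exact h2'
          have o2 : gd (degenAt c i) (2*j+1) = gd c (2*i+3) := by
            rw [show 2*j+1 = 2*i+3 from by omega]; exact h3'
          have op : gd (degenAt c i) p = gd c (2*i+1) + 1 := by
            rw [show p = 2*i+1 from by omega]; exact h1'
          rw [o1, o2] at e1
          rw [o1, op]
          omega
        · have o1 : gd (degenAt c i) (2*j) = gd c (2*j) := hGE (2*j) (by omega)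
          have o2 : gd (degenAt c i) (2*j+1) = gd c (2*j+1) := hGE (2*j+1) (by omega)
          have o3 : gd (degenAt c i) (2*j+2) = gd c (2*j+2) := hGE (2*j+2) (by omega)
          have op : gd (degenAt c i) p = gd c (2*i+3) := by
            rw [show p = 2*i+3 from by omega]; exact h3'
          rw [o1, o2] at e1
          rw [o2, o3] at e2
          rw [o1] at hpar
          have w := hT1 j (by omega) e1 e2 hpar (2*i+3) (by omega)
          rw [o1, op]
          exact w
        · rw [hGE (2*j) (by omega), hGE (2*j+1) (by omega)] at e1
          rw [hGE (2*j+1) (by omega), hGE (2*j+2) (by omega)] at e2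
          rw [hGE (2*j) (by omega)] at hpar
          rw [hGE (2*j) (by omega), hGE p (by omega)]
          exact hT1 j (by omega) e1 e2 hpar p hp
      · -- T2
        intro qq hq4 e1 e2 hpar
        rcases (by omega : 2*qq+4 < 2*i ∨ 2*qq+4 = 2*i ∨ 2*qq+2 = 2*i ∨ 2*qq = 2*i ∨
            2*qq = 2*i+2 ∨ 2*i+4 ≤ 2*qq) with h|h|h|h|h|h
        · rw [hLT (2*qq+1) (by omega), hLT (2*qq+2) (by omega)] at e1
          rw [hLT (2*qq+2) (by omega), hLT (2*qq+3) (by omega)] at e2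
          rw [hLT (2*qq+1) (by omega)] at hpar
          rw [hLT (2*qq+4) (by omega), hLT (2*qq+1) (by omega)]
          exact hT2 qq (by omega) e1 e2 hpar
        · have o4 : gd (degenAt c i) (2*qq+4) = gd c (2*i) + 1 := by
            rw [show 2*qq+4 = 2*i from h]; exact h0'
          rw [hLT (2*qq+1) (by omega), hLT (2*qq+2) (by omega)] at e1
          rw [hLT (2*qq+2) (by omega), hLT (2*qq+3) (by omega)] at e2
          rw [hLT (2*qq+1) (by omega)] at hpar
          have w := hT2 qq (by omega) e1 e2 hpar
          have e5 : gd c (2*qq+4) = gd c (2*i) := by rw [show 2*qq+4 = 2*i from h]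
          rw [o4, hLT (2*qq+1) (by omega)]
          omega
        · have o1 : gd (degenAt c i) (2*qq+1) = gd c (2*qq+1) := hLT (2*qq+1) (by omega)
          have o2 : gd (degenAt c i) (2*qq+2) = gd c (2*i) + 1 := by
            rw [show 2*qq+2 = 2*i from h]; exact h0'
          rw [o1, o2] at e1
          rw [o1] at hpar
          omega
        · have o1 : gd (degenAt c i) (2*qq+1) = gd c (2*i+1) + 1 := by
            rw [show 2*qq+1 = 2*i+1 from by omega]; exact h1'
          have o2 : gd (degenAt c i) (2*qq+2) = gd c (2*i+2) - 2 := by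
            rw [show 2*qq+2 = 2*i+2 from by omega]; exact h2'
          rw [o1, o2] at e1
          omega
        · have o1 : gd (degenAt c i) (2*qq+1) = gd c (2*qq+1) := by
            rw [show 2*qq+1 = 2*i+3 from by omega, h3']
          have o2 : gd (degenAt c i) (2*qq+2) = gd c (2*qq+2) := hGE (2*qq+2) (by omega)
          have o3 : gd (degenAt c i) (2*qq+3) = gd c (2*qq+3) := hGE (2*qq+3) (by omega)
          have o4 : gd (degenAt c i) (2*qq+4) = gd c (2*qq+4) := hGE (2*qq+4) (by omega)
          rw [o1, o2] at e1
          rw [o2, o3] at e2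
          rw [o1] at hpar
          rw [o4, o1]
          exact hT2 qq (by omega) e1 e2 hpar
        · rw [hGE (2*qq+1) (by omega), hGE (2*qq+2) (by omega)] at e1
          rw [hGE (2*qq+2) (by omega), hGE (2*qq+3) (by omega)] at e2
          rw [hGE (2*qq+1) (by omega)] at hpar
          rw [hGE (2*qq+4) (by omega), hGE (2*qq+1) (by omega)]
          exact hT2 qq (by omega) e1 e2 hpar
  · rcases eq_or_ne (gd c (2*i+2)) (gd c (2*i+3)) with hE2 | hE2
    ·
      have hq : ((gd c (2*i), gd c (2*i+1) + 2, gd c (2*i+2) - 1, gd c (2*i+3) - 1) : ℕ×ℕ×ℕ×ℕ)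
          = fundDeg (gd c (2*i)) (gd c (2*i+1)) (gd c (2*i+2)) (gd c (2*i+3)) := by
        rw [fundDeg, if_neg hE1, if_pos hE2]
      obtain ⟨hLT, h0, h1, h2, h3, hGE, hDel, hKeep⟩ :=
        degen_spec c i _ hq hn4 hD
          (fun (_ : gd c (2*i+2) - 1 = 0) (h4c : gd c (2*i+3) - 1 = 0) => by omega)
      have h0' : gd (degenAt c i) (2*i) = gd c (2*i) := h0
      have h1' : gd (degenAt c i) (2*i+1) = gd c (2*i+1) + 2 := h1
      have h2' : gd (degenAt c i) (2*i+2) = gd c (2*i+2) - 1 := h2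
      have h3' : gd (degenAt c i) (2*i+3) = gd c (2*i+3) - 1 := h3
      have hm : (degenAt c i).length + 2 = n ∨ (degenAt c i).length = n := by
        by_cases hcc : gd c (2*i+2) - 1 = 0 ∧ gd c (2*i+3) - 1 = 0
        · exact Or.inl (hDel hcc)
        · exact Or.inr (hKeep hcc)
      have hs1 : gd c (2*i+1) + 2 ≤ gd c (2*i) := by omega
      have hv3 : gd c (2*i+3) = gd c (2*i+1) := by omega
      have hT2i : 2*i+4 < n → gd c (2*i+4) + 3 ≤ gd c (2*i+1) := fun hh =>
        hT2 i hh hvv' hE2 he1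
      have hmv0 : gd c (2*i+1) = 0 → (degenAt c i).length = 2*i+2 := by
        intro h0v
        have hnd : 2*i+4 = n := by
          by_contra hne
          have := hT2i (by omega)
          omega
        have hk3 : gd c (2*i+2) - 1 = 0 := by omega
        have hk4 : gd c (2*i+3) - 1 = 0 := by omega
        have := hDel ⟨hk3, hk4⟩
        omega
      refine ⟨Nat.even_iff.2 (by omega), ?_, ?_, ?_, ?_, ?_⟩
      · -- Dec
        intro p hp
        have hpn : p+1 < n := by omega
        rcases (by omega : p+1 < 2*i ∨ p+1 = 2*i ∨ p = 2*i ∨ p = 2*i+1 ∨ p = 2*i+2 ∨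
            p = 2*i+3 ∨ 2*i+4 ≤ p) with h|h|h|h|h|h|h
        · rw [hLT (p+1) (by omega), hLT p (by omega)]; exact hD p hpn
        · rw [show p+1 = 2*i from h, h0', hLT p (by omega)]
          have w := hD p hpn
          rw [show p+1 = 2*i from h] at w
          exact w
        · rw [show p = 2*i from h, h1', h0']; omega
        · rw [show p = 2*i+1 from h, h2', h1']; omega
        · rw [show p = 2*i+2 from h, h3', h2']; omega
        · rw [show p = 2*i+3 from h, h3', hGE (2*i+3+1) (by omega)]
          show gd c (2*i+4) ≤ gd c (2*i+3) - 1
          have w := hT2i (by omega)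
          omega
        · rw [hGE (p+1) (by omega), hGE p (by omega)]; exact hD p hpn
      · -- O
        intro j hj hodd
        rcases (by omega : 2*j+2 ≤ 2*i ∨ 2*j = 2*i ∨ 2*j = 2*i+2 ∨ 2*j = 2*i+4 ∨
            2*i+6 ≤ 2*j) with h|h|h|h|h
        · rw [hLT (2*j) (by omega), hLT (2*j+1) (by omega)] at hodd
          obtain ⟨w1, w2, w3⟩ := hO j (by omega) hodd
          refine ⟨by rw [hLT (2*j) (by omega), hLT (2*j+1) (by omega)]; exact w1, ?_, ?_⟩
          · intro p hp
            rw [hLT (2*j) (by omega), hLT p (by omega)]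
            exact w2 p hp
          · intro hg2
            have w3' := w3 (by omega)
            rcases (by omega : 2*j+2 < 2*i ∨ 2*j+2 = 2*i) with hb | hb
            · rw [hLT (2*j+2) hb, hLT (2*j) (by omega)]; exact w3'
            · have o : gd (degenAt c i) (2*j+2) = gd c (2*j+2) := by
                rw [show 2*j+2 = 2*i from hb, h0']
              rw [o, hLT (2*j) (by omega)]
              exact w3'
        · have o1 : gd (degenAt c i) (2*j) = gd c (2*i) := by
            rw [show 2*j = 2*i from h]; exact h0'
          have o2 : gd (degenAt c i) (2*j+1) = gd c (2*i+1) + 2 := by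
            rw [show 2*j+1 = 2*i+1 from by omega]; exact h1'
          rw [o1, o2] at hodd
          exact absurd hodd (by omega)
        · have o1 : gd (degenAt c i) (2*j) = gd c (2*i+2) - 1 := by
            rw [show 2*j = 2*i+2 from h]; exact h2'
          have o2 : gd (degenAt c i) (2*j+1) = gd c (2*i+3) - 1 := by
            rw [show 2*j+1 = 2*i+3 from by omega]; exact h3'
          refine ⟨by rw [o1, o2]; omega, ?_, ?_⟩
          · intro p hp
            have op : gd (degenAt c i) p = gd c (2*i+1) + 2 := by
              rw [show p = 2*i+1 from by omega]; exact h1'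
            rw [o1, op]
            omega
          · intro hg2
            have o3 : gd (degenAt c i) (2*j+2) = gd c (2*j+2) := hGE (2*j+2) (by omega)
            rw [o3, o1]
            have w := hT2i (by omega)
            have e5 : gd c (2*j+2) = gd c (2*i+4) := by rw [show 2*j+2 = 2*i+4 from by omega]
            omega
        · have o1 : gd (degenAt c i) (2*j) = gd c (2*j) := hGE (2*j) (by omega)
          have o2 : gd (degenAt c i) (2*j+1) = gd c (2*j+1) := hGE (2*j+1) (by omega)
          rw [o1, o2] at hodd
          obtain ⟨w1, w2, w3⟩ := hO j (by omega) hodd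
          refine ⟨by rw [o1, o2]; exact w1, ?_, ?_⟩
          · intro p hp
            have hp' : p = 2*i+3 := by omega
            have w2' := w2 p hp
            rw [hp'] at w2'
            rw [o1, hp', h3']
            omega
          · intro hg2
            rw [o1, hGE (2*j+2) (by omega)]
            exact w3 (by omega)
        · have o1 : gd (degenAt c i) (2*j) = gd c (2*j) := hGE (2*j) (by omega)
          have o2 : gd (degenAt c i) (2*j+1) = gd c (2*j+1) := hGE (2*j+1) (by omega)
          rw [o1, o2] at hodd
          obtain ⟨w1, w2, w3⟩ := hO j (by omega) hodd
          refine ⟨by rw [o1, o2]; exact w1, ?_, ?_⟩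
          · intro p hp
            rw [o1, hGE p (by omega)]
            exact w2 p hp
          · intro hg2
            rw [o1, hGE (2*j+2) (by omega)]
            exact w3 (by omega)
      · -- R
        intro qq hq4 e1 e2 e3
        rcases (by omega : 2*qq+4 < 2*i ∨ 2*qq+4 = 2*i ∨ 2*qq+2 = 2*i ∨ 2*qq = 2*i ∨
            2*qq = 2*i+2 ∨ 2*i+4 ≤ 2*qq) with h|h|h|h|h|h
        · rw [hLT (2*qq+1) (by omega), hLT (2*qq+2) (by omega)] at e1
          rw [hLT (2*qq+2) (by omega), hLT (2*qq+3) (by omega)] at e2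
          rw [hLT (2*qq+3) (by omega), hLT (2*qq+4) (by omega)] at e3
          exact hR qq (by omega) e1 e2 e3
        · rw [hLT (2*qq+1) (by omega), hLT (2*qq+2) (by omega)] at e1
          rw [hLT (2*qq+2) (by omega), hLT (2*qq+3) (by omega)] at e2
          have o4 : gd (degenAt c i) (2*qq+4) = gd c (2*qq+4) := by
            rw [show 2*qq+4 = 2*i from h, h0']
          rw [hLT (2*qq+3) (by omega), o4] at e3
          exact hR qq (by omega) e1 e2 e3
        · have o3 : gd (degenAt c i) (2*qq+3) = gd c (2*i+1) + 2 := by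
            rw [show 2*qq+3 = 2*i+1 from by omega]; exact h1'
          have o4 : gd (degenAt c i) (2*qq+4) = gd c (2*i+2) - 1 := by
            rw [show 2*qq+4 = 2*i+2 from by omega]; exact h2'
          rw [o3, o4] at e3
          omega
        · have o1 : gd (degenAt c i) (2*qq+1) = gd c (2*i+1) + 2 := by
            rw [show 2*qq+1 = 2*i+1 from by omega]; exact h1'
          have o2 : gd (degenAt c i) (2*qq+2) = gd c (2*i+2) - 1 := by
            rw [show 2*qq+2 = 2*i+2 from by omega]; exact h2'
          rw [o1, o2] at e1
          omega
        · have o1 : gd (degenAt c i) (2*qq+1) = gd c (2*i+3) - 1 := by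
            rw [show 2*qq+1 = 2*i+3 from by omega]; exact h3'
          have o2 : gd (degenAt c i) (2*qq+2) = gd c (2*qq+2) := hGE (2*qq+2) (by omega)
          rw [o1, o2] at e1
          have e5 : gd c (2*qq+2) = gd c (2*i+4) := by rw [show 2*qq+2 = 2*i+4 from by omega]
          by_cases hv0 : gd c (2*i+1) = 0
          · have := hmv0 hv0
            omega
          · have w := hT2i (by omega)
            omega
        · rw [hGE (2*qq+1) (by omega), hGE (2*qq+2) (by omega)] at e1
          rw [hGE (2*qq+2) (by omega), hGE (2*qq+3) (by omega)] at e2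
          rw [hGE (2*qq+3) (by omega), hGE (2*qq+4) (by omega)] at e3
          exact hR qq (by omega) e1 e2 e3
      · -- T1
        intro j hj e1 e2 hpar p hp
        rcases (by omega : 2*j+2 < 2*i ∨ 2*j+2 = 2*i ∨ 2*j = 2*i ∨ 2*j = 2*i+2 ∨
            2*j = 2*i+4 ∨ 2*i+6 ≤ 2*j) with h|h|h|h|h|h
        · rw [hLT (2*j) (by omega), hLT (2*j+1) (by omega)] at e1
          rw [hLT (2*j+1) (by omega), hLT (2*j+2) (by omega)] at e2
          rw [hLT (2*j) (by omega)] at hpar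
          rw [hLT (2*j) (by omega), hLT p (by omega)]
          exact hT1 j (by omega) e1 e2 hpar p hp
        · have o2 : gd (degenAt c i) (2*j+2) = gd c (2*j+2) := by
            rw [show 2*j+2 = 2*i from h, h0']
          rw [hLT (2*j) (by omega), hLT (2*j+1) (by omega)] at e1
          rw [hLT (2*j+1) (by omega), o2] at e2
          rw [hLT (2*j) (by omega)] at hpar
          rw [hLT (2*j) (by omega), hLT p (by omega)]
          exact hT1 j (by omega) e1 e2 hpar p hp
        · have o2 : gd (degenAt c i) (2*j+1) = gd c (2*i+1) + 2 := by
            rw [show 2*j+1 = 2*i+1 from by omega]; exact h1'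
          have o3 : gd (degenAt c i) (2*j+2) = gd c (2*i+2) - 1 := by
            rw [show 2*j+2 = 2*i+2 from by omega]; exact h2'
          rw [o2, o3] at e2
          omega
        · have o1 : gd (degenAt c i) (2*j) = gd c (2*i+2) - 1 := by
            rw [show 2*j = 2*i+2 from h]; exact h2'
          rw [o1] at hpar
          by_cases hv0 : gd c (2*i+1) = 0
          · have := hmv0 hv0
            omega
          · omega
        · have o1 : gd (degenAt c i) (2*j) = gd c (2*j) := hGE (2*j) (by omega)
          have o2 : gd (degenAt c i) (2*j+1) = gd c (2*j+1) := hGE (2*j+1) (by omega)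
          have o3 : gd (degenAt c i) (2*j+2) = gd c (2*j+2) := hGE (2*j+2) (by omega)
          have op : gd (degenAt c i) p = gd c (2*i+3) - 1 := by
            rw [show p = 2*i+3 from by omega]; exact h3'
          rw [o1, o2] at e1
          rw [o2, o3] at e2
          rw [o1] at hpar
          have w := hT1 j (by omega) e1 e2 hpar (2*i+3) (by omega)
          rw [o1, op]
          omega
        · rw [hGE (2*j) (by omega), hGE (2*j+1) (by omega)] at e1
          rw [hGE (2*j+1) (by omega), hGE (2*j+2) (by omega)] at e2
          rw [hGE (2*j) (by omega)] at hpar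
          rw [hGE (2*j) (by omega), hGE p (by omega)]
          exact hT1 j (by omega) e1 e2 hpar p hp
      · -- T2
        intro qq hq4 e1 e2 hpar
        rcases (by omega : 2*qq+4 < 2*i ∨ 2*qq+4 = 2*i ∨ 2*qq+2 = 2*i ∨ 2*qq = 2*i ∨
            2*qq = 2*i+2 ∨ 2*i+4 ≤ 2*qq) with h|h|h|h|h|h
        · rw [hLT (2*qq+1) (by omega), hLT (2*qq+2) (by omega)] at e1
          rw [hLT (2*qq+2) (by omega), hLT (2*qq+3) (by omega)] at e2
          rw [hLT (2*qq+1) (by omega)] at hpar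
          rw [hLT (2*qq+4) (by omega), hLT (2*qq+1) (by omega)]
          exact hT2 qq (by omega) e1 e2 hpar
        · have o4 : gd (degenAt c i) (2*qq+4) = gd c (2*qq+4) := by
            rw [show 2*qq+4 = 2*i from h, h0']
          rw [hLT (2*qq+1) (by omega), hLT (2*qq+2) (by omega)] at e1
          rw [hLT (2*qq+2) (by omega), hLT (2*qq+3) (by omega)] at e2
          rw [hLT (2*qq+1) (by omega)] at hpar
          rw [o4, hLT (2*qq+1) (by omega)]
          exact hT2 qq (by omega) e1 e2 hpar
        · have o1 : gd (degenAt c i) (2*qq+1) = gd c (2*qq+1) := hLT (2*qq+1) (by omega)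
          have o2 : gd (degenAt c i) (2*qq+2) = gd c (2*i) := by
            rw [show 2*qq+2 = 2*i from h]; exact h0'
          have o3 : gd (degenAt c i) (2*qq+3) = gd c (2*i+1) + 2 := by
            rw [show 2*qq+3 = 2*i+1 from by omega]; exact h1'
          have o4 : gd (degenAt c i) (2*qq+4) = gd c (2*i+2) - 1 := by
            rw [show 2*qq+4 = 2*i+2 from by omega]; exact h2'
          rw [o1, o2] at e1
          rw [o2, o3] at e2
          rw [o1] at hpar
          rw [o4, o1]
          by_cases hv0 : gd c (2*i+1) = 0
          · have := hmv0 hv0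
            omega
          · omega
        · have o1 : gd (degenAt c i) (2*qq+1) = gd c (2*i+1) + 2 := by
            rw [show 2*qq+1 = 2*i+1 from by omega]; exact h1'
          have o2 : gd (degenAt c i) (2*qq+2) = gd c (2*i+2) - 1 := by
            rw [show 2*qq+2 = 2*i+2 from by omega]; exact h2'
          rw [o1, o2] at e1
          omega
        · have o1 : gd (degenAt c i) (2*qq+1) = gd c (2*i+3) - 1 := by
            rw [show 2*qq+1 = 2*i+3 from by omega]; exact h3'
          rw [o1] at hpar
          by_cases hv0 : gd c (2*i+1) = 0
          · have := hmv0 hv0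
            omega
          · omega
        · rw [hGE (2*qq+1) (by omega), hGE (2*qq+2) (by omega)] at e1
          rw [hGE (2*qq+2) (by omega), hGE (2*qq+3) (by omega)] at e2
          rw [hGE (2*qq+1) (by omega)] at hpar
          rw [hGE (2*qq+4) (by omega), hGE (2*qq+1) (by omega)]
          exact hT2 qq (by omega) e1 e2 hpar
    ·
      have hq : ((gd c (2*i), gd c (2*i+1) + 2, gd c (2*i+2) - 2, gd c (2*i+3)) : ℕ×ℕ×ℕ×ℕ)
          = fundDeg (gd c (2*i)) (gd c (2*i+1)) (gd c (2*i+2)) (gd c (2*i+3)) := by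
        rw [fundDeg, if_neg hE1, if_neg hE2]
      obtain ⟨hLT, h0, h1, h2, h3, hGE, hDel, hKeep⟩ :=
        degen_spec c i _ hq hn4 hD (fun _ h4 => h4)
      have h0' : gd (degenAt c i) (2*i) = gd c (2*i) := h0
      have h1' : gd (degenAt c i) (2*i+1) = gd c (2*i+1) + 2 := h1
      have h2' : gd (degenAt c i) (2*i+2) = gd c (2*i+2) - 2 := h2
      have h3' : gd (degenAt c i) (2*i+3) = gd c (2*i+3) := h3
      have hm : (degenAt c i).length + 2 = n ∨ (degenAt c i).length = n := by
        by_cases hcc : gd c (2*i+2) - 2 = 0 ∧ gd c (2*i+3) = 0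
        · exact Or.inl (hDel hcc)
        · exact Or.inr (hKeep hcc)
      have hs1 : gd c (2*i+1) + 2 ≤ gd c (2*i) := by omega
      have hs2 : gd c (2*i+3) + 2 ≤ gd c (2*i+1) := by omega
      refine ⟨Nat.even_iff.2 (by omega), ?_, ?_, ?_, ?_, ?_⟩
      · -- Dec
        intro p hp
        have hpn : p+1 < n := by omega
        rcases (by omega : p+1 < 2*i ∨ p+1 = 2*i ∨ p = 2*i ∨ p = 2*i+1 ∨ p = 2*i+2 ∨
            p = 2*i+3 ∨ 2*i+4 ≤ p) with h|h|h|h|h|h|h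
        · rw [hLT (p+1) (by omega), hLT p (by omega)]; exact hD p hpn
        · rw [show p+1 = 2*i from h, h0', hLT p (by omega)]
          have w := hD p hpn
          rw [show p+1 = 2*i from h] at w
          exact w
        · rw [show p = 2*i from h, h1', h0']; omega
        · rw [show p = 2*i+1 from h, h2', h1']; omega
        · rw [show p = 2*i+2 from h, h3', h2']; omega
        · rw [show p = 2*i+3 from h, h3', hGE (2*i+3+1) (by omega)]
          exact hD (2*i+3) (by omega)
        · rw [hGE (p+1) (by omega), hGE p (by omega)]; exact hD p hpn
      · -- O
        intro j hj hodd
        rcases (by omega : 2*j+2 ≤ 2*i ∨ 2*j = 2*i ∨ 2*j = 2*i+2 ∨ 2*j = 2*i+4 ∨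
            2*i+6 ≤ 2*j) with h|h|h|h|h
        · rw [hLT (2*j) (by omega), hLT (2*j+1) (by omega)] at hodd
          obtain ⟨w1, w2, w3⟩ := hO j (by omega) hodd
          refine ⟨by rw [hLT (2*j) (by omega), hLT (2*j+1) (by omega)]; exact w1, ?_, ?_⟩
          · intro p hp
            rw [hLT (2*j) (by omega), hLT p (by omega)]
            exact w2 p hp
          · intro hg2
            have w3' := w3 (by omega)
            rcases (by omega : 2*j+2 < 2*i ∨ 2*j+2 = 2*i) with hb | hb
            · rw [hLT (2*j+2) hb, hLT (2*j) (by omega)]; exact w3'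
            · have o : gd (degenAt c i) (2*j+2) = gd c (2*j+2) := by
                rw [show 2*j+2 = 2*i from hb, h0']
              rw [o, hLT (2*j) (by omega)]
              exact w3'
        · rw [show 2*j = 2*i from h] at hodd
          rw [h0', h1'] at hodd
          exact absurd hodd (by omega)
        · have o1 : gd (degenAt c i) (2*j) = gd c (2*i+2) - 2 := by
            rw [show 2*j = 2*i+2 from h]; exact h2'
          have o2 : gd (degenAt c i) (2*j+1) = gd c (2*i+3) := by
            rw [show 2*j+1 = 2*i+3 from by omega]; exact h3'
          rw [o1, o2] at hodd
          exact absurd hodd (by omega)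
        · have o1 : gd (degenAt c i) (2*j) = gd c (2*j) := hGE (2*j) (by omega)
          have o2 : gd (degenAt c i) (2*j+1) = gd c (2*j+1) := hGE (2*j+1) (by omega)
          rw [o1, o2] at hodd
          obtain ⟨w1, w2, w3⟩ := hO j (by omega) hodd
          refine ⟨by rw [o1, o2]; exact w1, ?_, ?_⟩
          · intro p hp
            have hp' : p = 2*i+3 := by omega
            have w2' := w2 p hp
            rw [hp'] at w2'
            rw [o1, hp', h3']
            exact w2'
          · intro hg2
            rw [o1, hGE (2*j+2) (by omega)]
            exact w3 (by omega)
        · have o1 : gd (degenAt c i) (2*j) = gd c (2*j) := hGE (2*j) (by omega)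
          have o2 : gd (degenAt c i) (2*j+1) = gd c (2*j+1) := hGE (2*j+1) (by omega)
          rw [o1, o2] at hodd
          obtain ⟨w1, w2, w3⟩ := hO j (by omega) hodd
          refine ⟨by rw [o1, o2]; exact w1, ?_, ?_⟩
          · intro p hp
            rw [o1, hGE p (by omega)]
            exact w2 p hp
          · intro hg2
            rw [o1, hGE (2*j+2) (by omega)]
            exact w3 (by omega)
      · -- R
        intro qq hq4 e1 e2 e3
        rcases (by omega : 2*qq+4 < 2*i ∨ 2*qq+4 = 2*i ∨ 2*qq+2 = 2*i ∨ 2*qq = 2*i ∨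
            2*qq = 2*i+2 ∨ 2*i+4 ≤ 2*qq) with h|h|h|h|h|h
        · rw [hLT (2*qq+1) (by omega), hLT (2*qq+2) (by omega)] at e1
          rw [hLT (2*qq+2) (by omega), hLT (2*qq+3) (by omega)] at e2
          rw [hLT (2*qq+3) (by omega), hLT (2*qq+4) (by omega)] at e3
          exact hR qq (by omega) e1 e2 e3
        · rw [hLT (2*qq+1) (by omega), hLT (2*qq+2) (by omega)] at e1
          rw [hLT (2*qq+2) (by omega), hLT (2*qq+3) (by omega)] at e2
          have o4 : gd (degenAt c i) (2*qq+4) = gd c (2*qq+4) := by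
            rw [show 2*qq+4 = 2*i from h, h0']
          rw [hLT (2*qq+3) (by omega), o4] at e3
          exact hR qq (by omega) e1 e2 e3
        · have o2 : gd (degenAt c i) (2*qq+2) = gd c (2*i) := by
            rw [show 2*qq+2 = 2*i from h]; exact h0'
          have o3 : gd (degenAt c i) (2*qq+3) = gd c (2*i+1) + 2 := by
            rw [show 2*qq+3 = 2*i+1 from by omega]; exact h1'
          have o4 : gd (degenAt c i) (2*qq+4) = gd c (2*i+2) - 2 := by
            rw [show 2*qq+4 = 2*i+2 from by omega]; exact h2'
          rw [o3, o4] at e3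
          omega
        · have o1 : gd (degenAt c i) (2*qq+1) = gd c (2*i+1) + 2 := by
            rw [show 2*qq+1 = 2*i+1 from by omega]; exact h1'
          have o2 : gd (degenAt c i) (2*qq+2) = gd c (2*i+2) - 2 := by
            rw [show 2*qq+2 = 2*i+2 from by omega]; exact h2'
          rw [o1, o2] at e1
          omega
        · have o1 : gd (degenAt c i) (2*qq+1) = gd c (2*qq+1) := by
            rw [show 2*qq+1 = 2*i+3 from by omega, h3']
          have o2 : gd (degenAt c i) (2*qq+2) = gd c (2*qq+2) := hGE (2*qq+2) (by omega)
          have o3 : gd (degenAt c i) (2*qq+3) = gd c (2*qq+3) := hGE (2*qq+3) (by omega)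
          have o4 : gd (degenAt c i) (2*qq+4) = gd c (2*qq+4) := hGE (2*qq+4) (by omega)
          rw [o1, o2] at e1
          rw [o2, o3] at e2
          rw [o3, o4] at e3
          exact hR qq (by omega) e1 e2 e3
        · rw [hGE (2*qq+1) (by omega), hGE (2*qq+2) (by omega)] at e1
          rw [hGE (2*qq+2) (by omega), hGE (2*qq+3) (by omega)] at e2
          rw [hGE (2*qq+3) (by omega), hGE (2*qq+4) (by omega)] at e3
          exact hR qq (by omega) e1 e2 e3
      · -- T1
        intro j hj e1 e2 hpar p hp
        rcases (by omega : 2*j+2 < 2*i ∨ 2*j+2 = 2*i ∨ 2*j = 2*i ∨ 2*j = 2*i+2 ∨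
            2*j = 2*i+4 ∨ 2*i+6 ≤ 2*j) with h|h|h|h|h|h
        · rw [hLT (2*j) (by omega), hLT (2*j+1) (by omega)] at e1
          rw [hLT (2*j+1) (by omega), hLT (2*j+2) (by omega)] at e2
          rw [hLT (2*j) (by omega)] at hpar
          rw [hLT (2*j) (by omega), hLT p (by omega)]
          exact hT1 j (by omega) e1 e2 hpar p hp
        · have o2 : gd (degenAt c i) (2*j+2) = gd c (2*j+2) := by
            rw [show 2*j+2 = 2*i from h, h0']
          rw [hLT (2*j) (by omega), hLT (2*j+1) (by omega)] at e1
          rw [hLT (2*j+1) (by omega), o2] at e2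
          rw [hLT (2*j) (by omega)] at hpar
          rw [hLT (2*j) (by omega), hLT p (by omega)]
          exact hT1 j (by omega) e1 e2 hpar p hp
        · have o1 : gd (degenAt c i) (2*j) = gd c (2*i) := by
            rw [show 2*j = 2*i from h]; exact h0'
          have o2 : gd (degenAt c i) (2*j+1) = gd c (2*i+1) + 2 := by
            rw [show 2*j+1 = 2*i+1 from by omega]; exact h1'
          have o3 : gd (degenAt c i) (2*j+2) = gd c (2*i+2) - 2 := by
            rw [show 2*j+2 = 2*i+2 from by omega]; exact h2'
          rw [o2, o3] at e2
          omega
        · have o1 : gd (degenAt c i) (2*j) = gd c (2*i+2) - 2 := by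
            rw [show 2*j = 2*i+2 from h]; exact h2'
          have o2 : gd (degenAt c i) (2*j+1) = gd c (2*i+3) := by
            rw [show 2*j+1 = 2*i+3 from by omega]; exact h3'
          have op : gd (degenAt c i) p = gd c (2*i+1) + 2 := by
            rw [show p = 2*i+1 from by omega]; exact h1'
          rw [o1, o2] at e1
          rw [o1, op]
          omega
        · have o1 : gd (degenAt c i) (2*j) = gd c (2*j) := hGE (2*j) (by omega)
          have o2 : gd (degenAt c i) (2*j+1) = gd c (2*j+1) := hGE (2*j+1) (by omega)
          have o3 : gd (degenAt c i) (2*j+2) = gd c (2*j+2) := hGE (2*j+2) (by omega)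
          have op : gd (degenAt c i) p = gd c (2*i+3) := by
            rw [show p = 2*i+3 from by omega]; exact h3'
          rw [o1, o2] at e1
          rw [o2, o3] at e2
          rw [o1] at hpar
          have w := hT1 j (by omega) e1 e2 hpar (2*i+3) (by omega)
          rw [o1, op]
          exact w
        · rw [hGE (2*j) (by omega), hGE (2*j+1) (by omega)] at e1
          rw [hGE (2*j+1) (by omega), hGE (2*j+2) (by omega)] at e2
          rw [hGE (2*j) (by omega)] at hpar
          rw [hGE (2*j) (by omega), hGE p (by omega)]
          exact hT1 j (by omega) e1 e2 hpar p hp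
      · -- T2
        intro qq hq4 e1 e2 hpar
        rcases (by omega : 2*qq+4 < 2*i ∨ 2*qq+4 = 2*i ∨ 2*qq+2 = 2*i ∨ 2*qq = 2*i ∨
            2*qq = 2*i+2 ∨ 2*i+4 ≤ 2*qq) with h|h|h|h|h|h
        · rw [hLT (2*qq+1) (by omega), hLT (2*qq+2) (by omega)] at e1
          rw [hLT (2*qq+2) (by omega), hLT (2*qq+3) (by omega)] at e2
          rw [hLT (2*qq+1) (by omega)] at hpar
          rw [hLT (2*qq+4) (by omega), hLT (2*qq+1) (by omega)]
          exact hT2 qq (by omega) e1 e2 hpar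
        · have o4 : gd (degenAt c i) (2*qq+4) = gd c (2*qq+4) := by
            rw [show 2*qq+4 = 2*i from h, h0']
          rw [hLT (2*qq+1) (by omega), hLT (2*qq+2) (by omega)] at e1
          rw [hLT (2*qq+2) (by omega), hLT (2*qq+3) (by omega)] at e2
          rw [hLT (2*qq+1) (by omega)] at hpar
          rw [o4, hLT (2*qq+1) (by omega)]
          exact hT2 qq (by omega) e1 e2 hpar
        · have o1 : gd (degenAt c i) (2*qq+1) = gd c (2*qq+1) := hLT (2*qq+1) (by omega)
          have o2 : gd (degenAt c i) (2*qq+2) = gd c (2*i) := by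
            rw [show 2*qq+2 = 2*i from h]; exact h0'
          have o3 : gd (degenAt c i) (2*qq+3) = gd c (2*i+1) + 2 := by
            rw [show 2*qq+3 = 2*i+1 from by omega]; exact h1'
          have o4 : gd (degenAt c i) (2*qq+4) = gd c (2*i+2) - 2 := by
            rw [show 2*qq+4 = 2*i+2 from by omega]; exact h2'
          rw [o1, o2] at e1
          rw [o2, o3] at e2
          rw [o1] at hpar
          rw [o4, o1]
          omega
        · have o1 : gd (degenAt c i) (2*qq+1) = gd c (2*i+1) + 2 := by
            rw [show 2*qq+1 = 2*i+1 from by omega]; exact h1'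
          have o2 : gd (degenAt c i) (2*qq+2) = gd c (2*i+2) - 2 := by
            rw [show 2*qq+2 = 2*i+2 from by omega]; exact h2'
          rw [o1, o2] at e1
          omega
        · have o1 : gd (degenAt c i) (2*qq+1) = gd c (2*qq+1) := by
            rw [show 2*qq+1 = 2*i+3 from by omega, h3']
          have o2 : gd (degenAt c i) (2*qq+2) = gd c (2*qq+2) := hGE (2*qq+2) (by omega)
          have o3 : gd (degenAt c i) (2*qq+3) = gd c (2*qq+3) := hGE (2*qq+3) (by omega)
          have o4 : gd (degenAt c i) (2*qq+4) = gd c (2*qq+4) := hGE (2*qq+4) (by omega)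
          rw [o1, o2] at e1
          rw [o2, o3] at e2
          rw [o1] at hpar
          rw [o4, o1]
          exact hT2 qq (by omega) e1 e2 hpar
        · rw [hGE (2*qq+1) (by omega), hGE (2*qq+2) (by omega)] at e1
          rw [hGE (2*qq+2) (by omega), hGE (2*qq+3) (by omega)] at e2
          rw [hGE (2*qq+1) (by omega)] at hpar
          rw [hGE (2*qq+4) (by omega), hGE (2*qq+1) (by omega)]
          exact hT2 qq (by omega) e1 e2 hpar


lemma chains_cons_ne (a b : ℕ) (r : List ℕ) : chains (a :: b :: r) ≠ [] := by
  cases hr : chains r with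
  | nil => simp [chains, hr]
  | cons C L =>
    by_cases hC : C.headI < b <;> simp [chains, hr, hC]

lemma chains_struct : ∀ (N : ℕ) (c : List ℕ), c.length ≤ N → Even c.length → c ≠ [] →
    ∃ k C L, chains c = C :: L ∧ 1 ≤ k ∧ 2*k ≤ c.length ∧ C = c.take (2*k) ∧
      chains (c.drop (2*k)) = L ∧ (2*k < c.length → gd c (2*k) < gd c (2*k-1)) := by
  intro N
  induction N with
  | zero =>
    intro c hc he hne
    exact absurd (List.length_eq_zero_iff.1 (by omega)) hne
  | succ N ih =>
    intro c hc he hne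
    obtain ⟨a, b, rest, rfl⟩ : ∃ a b r, c = a :: b :: r := by
      match c with
      | [] => exact absurd rfl hne
      | [x] => exact absurd he (by simp [Nat.even_iff])
      | a :: b :: r => exact ⟨a, b, r, rfl⟩
    have hlc : (a :: b :: rest).length = rest.length + 2 := by simp
    cases hr : chains rest with
    | nil =>
      have hrest : rest = [] := by
        match rest, hr with
        | [], _ => rfl
        | [x], _ =>
          rw [hlc] at he
          exact absurd he (by simp [Nat.even_iff])
        | x :: y :: t, hr => exact absurd hr (chains_cons_ne x y t)
      subst hrest
      refine ⟨1, [a,b], [], by simp [chains, hr], le_refl 1, by simp, by simp, by simp [chains],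
        by intro h; simp at h⟩
    | cons C L =>
      have hrne : rest ≠ [] := by intro h; rw [h] at hr; simp [chains] at hr
      have hre : Even rest.length := by
        rw [hlc] at he
        have := Nat.even_iff.1 he
        exact Nat.even_iff.2 (by omega)
      obtain ⟨k', C', L', hch', hk1', hk2', hCt', hLd', hcut'⟩ :=
        ih rest (by rw [hlc] at hc; omega) hre hrne
      rw [hr] at hch'
      injection hch' with hCeq hLeq
      subst hCeq hLeq
      have hheadI : C.headI = gd rest 0 := by
        obtain ⟨r0, rt, rfl⟩ : ∃ r0 rt, rest = r0 :: rt := by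
          cases rest with
          | nil => exact absurd rfl hrne
          | cons r0 rt => exact ⟨r0, rt, rfl⟩
        rw [hCt', show 2*k' = (2*k'-1)+1 from by omega, List.take_succ_cons]
        rfl
      by_cases hcut : C.headI < b
      · refine ⟨1, [a,b], C :: L, by simp [chains, hr, hcut], le_refl 1, by simp, rfl, hr, ?_⟩
        intro _
        show gd rest 0 < b
        rw [← hheadI]
        exact hcut
      · refine ⟨k'+1, a::b::C, L, by simp [chains, hr, hcut], by omega, ?_, ?_, ?_, ?_⟩
        · rw [hlc]; omega
        · rw [hCt', show 2*(k'+1) = (2*k')+1+1 from by ring, List.take_succ_cons,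
            List.take_succ_cons]
        · rw [show 2*(k'+1) = (2*k')+1+1 from by ring, List.drop_succ_cons, List.drop_succ_cons]
          exact hLd'
        · intro h
          have w := hcut' (by rw [hlc] at h; omega)
          have g1 : gd (a::b::rest) (2*(k'+1)) = gd rest (2*k') := by
            rw [show 2*(k'+1) = 2*k'+2 from by ring]
            exact gd_cons2 a b rest (2*k')
          have g2 : gd (a::b::rest) (2*(k'+1)-1) = gd rest (2*k'-1) := by
            rw [show 2*(k'+1)-1 = (2*k'-1)+2 from by omega]
            exact gd_cons2 a b rest (2*k'-1)
          rw [g1, g2]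
          exact w

lemma chains_struct' (c : List ℕ) (he : Even c.length) (hne : c ≠ []) :
    ∃ k C L, chains c = C :: L ∧ 1 ≤ k ∧ 2*k ≤ c.length ∧ C = c.take (2*k) ∧
      chains (c.drop (2*k)) = L ∧ (2*k < c.length → gd c (2*k) < gd c (2*k-1)) :=
  chains_struct c.length c le_rfl he hne

def G1 (c : List ℕ) : Prop := ∀ j, 2*j+1 < c.length → gd c (2*j) = gd c (2*j+1) →
  (∀ p, p+1 = 2*j → gd c (2*j) < gd c p) ∧ (2*j+2 < c.length → gd c (2*j+2) < gd c (2*j+1))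

lemma generic_G1 : ∀ (N : ℕ) (c : List ℕ), c.length ≤ N → Even c.length → GenericSeq c →
    G1 c := by
  intro N
  induction N with
  | zero =>
    intro c hc he hg j hj heq
    omega
  | succ N ih =>
    intro c hc he hg j hj heq
    have hne : c ≠ [] := by
      intro h
      subst h
      simp at hj
    obtain ⟨k, C, L, hch, hk1, hk2, hCt, hLd, hcut⟩ := chains_struct' c he hne
    have hgC : GenericChain C := hg C (by rw [hch]; exact List.mem_cons_self)
    have hCl : C.length = 2*k := by rw [hCt, List.length_take]; omega
    by_cases hjk : 2*j+1 < 2*k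
    · rcases hgC with ⟨hl2, hpair⟩ | ⟨hl4, hstrict⟩
      · have hk : k = 1 := by omega
        have hj0 : j = 0 := by omega
        subst hj0
        constructor
        · intro p hp
          omega
        · intro h2
          have w := hcut (by omega)
          have w' : gd c 2 < gd c 1 := by rw [hk] at w; exact w
          exact w'
      · have hCg : ∀ p, p < 2*k → gd C p = gd c p := by
          intro p hp
          rw [hCt]
          exact gd_take c (2*k) p hp
        have hst : gd C (2*j+1) < gd C (2*j) := hstrict j (by omega)
        rw [hCg (2*j+1) (by omega), hCg (2*j) (by omega)] at hst
        omega
    · have hgd : GenericSeq (c.drop (2*k)) := by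
        intro X hX
        exact hg X (by rw [hch]; exact List.mem_cons_of_mem _ (hLd ▸ hX))
      have heD : Even (c.drop (2*k)).length := by
        rw [List.length_drop]
        have := Nat.even_iff.1 he
        exact Nat.even_iff.2 (by omega)
      have hIH := ih (c.drop (2*k)) (by rw [List.length_drop]; omega) heD hgd
      have hsh : ∀ p, gd (c.drop (2*k)) p = gd c (2*k + p) := fun p => gd_drop c (2*k) p
      have heq' : gd (c.drop (2*k)) (2*(j-k)) = gd (c.drop (2*k)) (2*(j-k)+1) := by
        rw [hsh, hsh, show 2*k + 2*(j-k) = 2*j from by omega,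
          show 2*k + (2*(j-k)+1) = 2*j+1 from by omega]
        exact heq
      obtain ⟨wl, wr⟩ := hIH (j-k) (by rw [List.length_drop]; omega) heq'
      constructor
      · intro p hp
        by_cases hjk2 : j = k
        · have w := hcut (by omega)
          have g1 : gd c (2*j) = gd c (2*k) := by rw [show 2*j = 2*k from by omega]
          have g2 : gd c p = gd c (2*k-1) := by rw [show p = 2*k-1 from by omega]
          omega
        · have w := wl (p - 2*k) (by omega)
          rw [hsh, hsh, show 2*k + 2*(j-k) = 2*j from by omega,
            show 2*k + (p - 2*k) = p from by omega] at w
          exact w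
      · intro h2
        have w := wr (by rw [List.length_drop]; omega)
        rw [hsh, hsh, show 2*k + (2*(j-k)+2) = 2*j+2 from by omega,
          show 2*k + (2*(j-k)+1) = 2*j+1 from by omega] at w
        exact w

lemma dec_of_chain' (c : List ℕ) (h : c.Chain' (· ≥ ·)) : Dec c := by
  intro p hp
  have hg := List.isChain_iff_getElem.1 h p (by omega)
  have e1 : gd c p = c.get ⟨p, by omega⟩ := by
    simp [gd, List.getElem?_eq_getElem (show p < c.length by omega)]
  have e2 : gd c (p+1) = c.get ⟨p+1, by omega⟩ := by
    simp [gd, List.getElem?_eq_getElem (show p+1 < c.length from hp)]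
  rw [e1, e2]
  exact hg

lemma inv_of_generic (c : List ℕ) (hT : TypeC c) (hg : GenericSeq c)
    (he : ∀ x ∈ c, Even x) : Inv c := by
  obtain ⟨hL, hCh, _⟩ := hT
  have hD : Dec c := dec_of_chain' c hCh
  have hev : ∀ p, p < c.length → gd c p % 2 = 0 := by
    intro p hp
    have hm : gd c p ∈ c := by
      rw [gd, List.getD_eq_getElem c 0 hp]
      exact List.getElem_mem hp
    exact Nat.even_iff.1 (he _ hm)
  have hg1 : G1 c := generic_G1 c.length c le_rfl hL hg
  refine ⟨hL, hD, ?_, ?_, ?_, ?_⟩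
  · intro j hj hodd
    have o1 := hev (2*j) (by omega)
    have o2 := hev (2*j+1) (by omega)
    omega
  · intro q hq e1 e2 e3
    obtain ⟨wl, _⟩ := hg1 (q+1) (by omega)
      (show gd c (2*(q+1)) = gd c (2*(q+1)+1) from e2)
    have w : gd c (2*q+2) < gd c (2*q+1) := wl (2*q+1) (by omega)
    omega
  · intro j hjl e1 e2 hpar p hp
    obtain ⟨_, wr⟩ := hg1 j (by omega) e1
    have := wr (by omega)
    omega
  · intro q hq e1 e2 hpar
    obtain ⟨wl, _⟩ := hg1 (q+1) (by omega)
      (show gd c (2*(q+1)) = gd c (2*(q+1)+1) from e2)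
    have w : gd c (2*q+2) < gd c (2*q+1) := wl (2*q+1) (by omega)
    omega

lemma inv_tail (a b : ℕ) (r : List ℕ) (h : Inv (a :: b :: r)) : Inv r := by
  obtain ⟨hL, hD, hO, hR, hT1, hT2⟩ := h
  have hl : (a::b::r).length = r.length + 2 := rfl
  refine ⟨?_, ?_, ?_, ?_, ?_, ?_⟩
  · rw [hl] at hL
    have := Nat.even_iff.1 hL
    exact Nat.even_iff.2 (by omega)
  · intro p hp
    exact hD (p+2) (by rw [hl]; omega)
  · intro j hj hodd
    obtain ⟨w1, w2, w3⟩ := hO (j+1) (by rw [hl]; omega) hodd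
    exact ⟨w1, fun p hp => w2 (p+2) (by omega), fun h2 => w3 (by rw [hl]; omega)⟩
  · intro q hq e1 e2 e3
    exact hR (q+1) (by rw [hl]; omega) e1 e2 e3
  · intro j hj e1 e2 hpar p hp
    exact hT1 (j+1) (by rw [hl]; omega) e1 e2 hpar (p+2) (by omega)
  · intro q hq e1 e2 hpar
    exact hT2 (q+1) (by rw [hl]; omega) e1 e2 hpar

lemma inv_chains : ∀ (N : ℕ) (c : List ℕ), c.length ≤ N → Inv c →
    ∀ C ∈ chains c, ((∃ x ∈ C, Odd x) ↔ ∃ x, Odd x ∧ C = [x, x]) := by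
  intro N
  induction N with
  | zero =>
    intro c hc _ C hC
    have : c = [] := List.length_eq_zero_iff.1 (by omega)
    subst this
    simp [chains] at hC
  | succ N ih =>
    intro c hc hInv C hC
    rcases c with _ | ⟨a, t⟩
    · simp [chains] at hC
    rcases t with _ | ⟨b, rest⟩
    · exact absurd hInv.1 (by simp [Nat.even_iff])
    have hInvR : Inv rest := inv_tail a b rest hInv
    have hlc : (a :: b :: rest).length = rest.length + 2 := rfl
    have hO := hInv.2.2.1
    have hpair : (a % 2 = 1 ∨ b % 2 = 1) →
        a = b ∧ (2 < (a::b::rest).length → gd (a::b::rest) 2 + 2 ≤ a) := by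
      intro hodd
      obtain ⟨w1, _, w3⟩ := hO 0 (by rw [hlc]; omega) hodd
      exact ⟨w1, w3⟩
    cases hr : chains rest with
    | nil =>
      have hch : chains (a::b::rest) = [[a,b]] := by simp [chains, hr]
      rw [hch] at hC
      have hC' : C = [a, b] := by simpa using hC
      subst hC'
      constructor
      · rintro ⟨x, hx, hxo⟩
        have hxab : x = a ∨ x = b := by simpa using hx
        have hab : a = b := by
          refine (hpair ?_).1
          rcases hxab with rfl | rfl
          · exact Or.inl (Nat.odd_iff.1 hxo)
          · exact Or.inr (Nat.odd_iff.1 hxo)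
        rcases hxab with rfl | rfl
        · exact ⟨x, hxo, by rw [hab]⟩
        · exact ⟨x, hxo, by rw [← hab]⟩
      · rintro ⟨x, hxo, hCx⟩
        exact ⟨x, by rw [hCx]; simp, hxo⟩
    | cons C' L' =>
      have hrne : rest ≠ [] := by intro h; rw [h] at hr; simp [chains] at hr
      obtain ⟨k, C'', L'', hch'', hk1, hk2, hCt, hLd, hcut⟩ :=
        chains_struct' rest hInvR.1 hrne
      rw [hr] at hch''
      injection hch'' with hCeq hLeq
      subst hCeq hLeq
      by_cases hcutb : C'.headI < b
      · have hch : chains (a::b::rest) = [a,b] :: C' :: L' := by simp [chains, hr, hcutb]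
        rw [hch] at hC
        rcases List.mem_cons.1 hC with rfl | hC2
        · constructor
          · rintro ⟨x, hx, hxo⟩
            have hxab : x = a ∨ x = b := by simpa using hx
            have hab : a = b := by
              refine (hpair ?_).1
              rcases hxab with rfl | rfl
              · exact Or.inl (Nat.odd_iff.1 hxo)
              · exact Or.inr (Nat.odd_iff.1 hxo)
            rcases hxab with rfl | rfl
            · exact ⟨x, hxo, by rw [hab]⟩
            · exact ⟨x, hxo, by rw [← hab]⟩
          · rintro ⟨x, hxo, hCx⟩
            exact ⟨x, by rw [hCx]; simp, hxo⟩
        · exact ih rest (by rw [hlc] at hc; omega) hInvR C (by rw [hr]; exact hC2)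
      · have hch : chains (a::b::rest) = (a::b::C') :: L' := by simp [chains, hr, hcutb]
        rw [hch] at hC
        have hlC' : C'.length = 2*k := by rw [hCt, List.length_take]; omega
        have hheadI : C'.headI = gd rest 0 := by
          obtain ⟨r0, rt, hrr⟩ : ∃ r0 rt, rest = r0 :: rt := by
            cases rest with
            | nil => exact absurd rfl hrne
            | cons r0 rt => exact ⟨r0, rt, rfl⟩
          subst hrr
          rw [hCt, show 2*k = (2*k-1)+1 from by omega, List.take_succ_cons]
          rfl
        rcases List.mem_cons.1 hC with rfl | hC2
        · have hg2h : gd (a::b::rest) 2 = C'.headI := by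
            rw [hheadI]; rfl
          constructor
          · rintro ⟨x, hx, hxo⟩
            exfalso
            rcases List.mem_cons.1 hx with rfl | hx2
            · have h1 := hpair (Or.inl (Nat.odd_iff.1 hxo))
              have hw := h1.2 (by rw [hlc]; omega)
              omega
            · rcases List.mem_cons.1 hx2 with rfl | hx3
              · have h1 := hpair (Or.inr (Nat.odd_iff.1 hxo))
                have hw := h1.2 (by rw [hlc]; omega)
                have hab := h1.1
                omega
              · have hiff := ih rest (by rw [hlc] at hc; omega) hInvR C'
                  (by rw [hr]; exact List.mem_cons_self)
                obtain ⟨y, hyo, hC'y⟩ := hiff.1 ⟨x, hx3, hxo⟩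
                have hk1' : k = 1 := by
                  rw [hC'y] at hlC'
                  simp at hlC'
                  omega
                have htake : rest.take (2*k) = [y, y] := by rw [← hCt]; exact hC'y
                have hg2 : gd (a::b::rest) (2*1) = y := by
                  show gd rest 0 = y
                  rw [← gd_take rest (2*k) 0 (by omega), htake]
                  rfl
                have hg3 : gd (a::b::rest) (2*1+1) = y := by
                  show gd rest 1 = y
                  rw [← gd_take rest (2*k) 1 (by omega), htake]
                  rfl
                have hy2 : y % 2 = 1 := Nat.odd_iff.1 hyo
                obtain ⟨_, w2, _⟩ := hO 1 (by rw [hlc]; omega) (Or.inl (by omega))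
                have hw := w2 1 rfl
                have hg1b : gd (a::b::rest) 1 = b := rfl
                have hhy : C'.headI = y := by rw [hC'y]; rfl
                omega
          · rintro ⟨x, hxo, hCx⟩
            have hnil : C' = [] := by
              have h2 := congrArg List.length hCx
              simpa using h2
            rw [hnil] at hlC'
            simp at hlC'
            omega
        · exact ih rest (by rw [hlc] at hc; omega) hInvR C
            (by rw [hr]; exact List.mem_cons_of_mem _ hC2)


end NormProof

/-- for an even generic type C column sequence `O`, every
member of `Norm(O)` is special (an odd entry in an even position equals the
next entry), and a chain of a member contains an odd entry exactly when it
is of the form `[x, x]` with `x` odd. -/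
theorem normMem_special (O : List ℕ) (hO : TypeC O) (hg : GenericSeq O)
    (he : ∀ x ∈ O, Even x) :
    ∀ O', NormMem O O' →
      (∀ i, 2 * i + 1 < O'.length → Odd (O'.getD (2 * i) 0) →
        O'.getD (2 * i) 0 = O'.getD (2 * i + 1) 0) ∧
      ∀ C ∈ chains O', ((∃ x ∈ C, Odd x) ↔ ∃ x, Odd x ∧ C = [x, x]) := by
  intro O' hmem
  have hInv : NormProof.Inv O' := by
    induction hmem with
    | base => exact NormProof.inv_of_generic O hO hg he
    | step c i hm hlen heq ih => exact NormProof.inv_step c i ih hlen heq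
  refine ⟨?_, ?_⟩
  · intro i hlt hodd
    exact (hInv.2.2.1 i hlt (Or.inl (Nat.odd_iff.1 hodd))).1
  · exact NormProof.inv_chains O'.length O' le_rfl hInv
end

section
/- Let O be a type C column sequence one of whose chains contains consecutive entries b_{2i−2} > (b_{2i−1} = b_{2i}) = … = (b_{2j−1} = b_{2j}) > b_{2j+1} for some 1 ≤ i ≤ j. Let O' be obtained from O by replacing the entry b_{2i−1} by b_{2i−1} + 2 and the entry b_{2j} by b_{2j} − 2. Then O' is again a type C column sequence with the same total sum, and Σ_{m≤n} (O')_m ≥ Σ_{m≤n} O_m for every n, with strict inequality for some n; hence the nilpotent orbit with columns O' is strictly contained in the Zariski closure of the nilpotent orbit with columns O. -/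
lemma getD_set' (l : List ℕ) (i j a : ℕ) (h : i < l.length) :
    (l.set i a).getD j 0 = if j = i then a else l.getD j 0 := by
  rw [List.getD_eq_getElem?_getD, List.getD_eq_getElem?_getD, List.getElem?_set]
  split
  · next hij => simp [hij.symm, h]
  · next hij => rw [if_neg (fun hji => hij hji.symm)]

lemma take_sum_eq (l : List ℕ) (n : ℕ) :
    (l.take n).sum = ∑ m ∈ Finset.range n, l.getD m 0 := by
  induction n with
  | zero => simp
  | succ n ih =>
    rw [List.take_succ, List.sum_append, ih, Finset.sum_range_succ,
      List.getD_eq_getElem?_getD]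
    cases h : l[n]? <;> simp [h]

/-- if a chain of a type C column sequence `O` contains a
Kraft–Procesi configuration
`b_{2i-2} > (b_{2i-1} = b_{2i}) = … = (b_{2j-1} = b_{2j}) > b_{2j+1}`
(here the entry before the equal block sits at the even position `2s`, the
equal block occupies positions `2s+1, …, 2t`, and the entry after it sits
at position `2t+1`), then raising the entry at position `2s+1` by 2 and
lowering the one at position `2t` by 2 yields a type C column sequence with
the same total sum which strictly dominates `O` in the prefix-sum order;
hence its orbit is strictly contained in the closure of the orbit of `O`. -/
theorem kp_configuration_degeneration (O : List ℕ) (hO : TypeC O)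
    (s t : ℕ) (hst : s < t) (hlen : 2 * t + 1 < O.length)
    (hdrop1 : O.getD (2 * s + 1) 0 < O.getD (2 * s) 0)
    (heq : ∀ m, 2 * s + 1 ≤ m → m < 2 * t → O.getD m 0 = O.getD (m + 1) 0)
    (hdrop2 : O.getD (2 * t + 1) 0 < O.getD (2 * t) 0) :
    ∀ O', O' = (O.set (2 * s + 1) (O.getD (2 * s + 1) 0 + 2)).set (2 * t)
        (O.getD (2 * t) 0 - 2) →
      TypeC O' ∧ O'.sum = O.sum ∧
        (∀ n, (O.take n).sum ≤ (O'.take n).sum) ∧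
        ∃ n, (O.take n).sum < (O'.take n).sum := by
  intro O' hO'
  obtain ⟨hOeven, hOchain, hOpar⟩ := hO
  have hlt1 : 2 * s + 1 < O.length := by omega
  have hlt2 : 2 * t < O.length := by omega
  -- all entries in the equal block equal O.getD (2*t) 0
  have hval : ∀ m, 2 * s + 1 ≤ m → m ≤ 2 * t → O.getD m 0 = O.getD (2 * t) 0 := by
    have aux : ∀ k m, 2 * s + 1 ≤ m → m + k = 2 * t → O.getD m 0 = O.getD (2 * t) 0 := by
      intro k
      induction k with
      | zero => intro m _ h2; rw [show m = 2 * t from by omega]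
      | succ k ih =>
        intro m h1 h2
        rw [heq m h1 (by omega)]
        exact ih (m + 1) (by omega) (by omega)
    intro m h1 h2
    exact aux (2 * t - m) m h1 (by omega)
  have hval1 : O.getD (2 * s + 1) 0 = O.getD (2 * t) 0 := hval _ le_rfl (by omega)
  obtain ⟨k1, hk1⟩ := hOpar s (by omega)
  obtain ⟨k2, hk2⟩ := hOpar t (by omega)
  have hu : O.getD (2 * t) 0 + 2 ≤ O.getD (2 * s) 0 := by omega
  have hw : O.getD (2 * t + 1) 0 + 2 ≤ O.getD (2 * t) 0 := by omega
  have hlen' : O'.length = O.length := by rw [hO']; simp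
  have hg : ∀ m, O'.getD m 0 =
      if m = 2 * s + 1 then O.getD (2 * s + 1) 0 + 2
      else if m = 2 * t then O.getD (2 * t) 0 - 2
      else O.getD m 0 := by
    intro m
    rw [hO', getD_set' _ _ _ _ (by rw [List.length_set]; exact hlt2),
      getD_set' _ _ _ _ hlt1]
    by_cases hm2 : m = 2 * t
    · rw [if_pos hm2, if_neg (show m ≠ 2 * s + 1 by omega), if_pos hm2]
    · rw [if_neg hm2]
      by_cases hm1 : m = 2 * s + 1
      · rw [if_pos hm1, if_pos hm1]
      · rw [if_neg hm1, if_neg hm1, if_neg hm2]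
  -- monotonicity of O
  have hmono : ∀ a b : ℕ, a ≤ b → b < O.length → O.getD b 0 ≤ O.getD a 0 := by
    intro a b hab hb
    rcases eq_or_lt_of_le hab with rfl | hab'
    · exact le_rfl
    · rw [List.getD_eq_getElem O 0 hb, List.getD_eq_getElem O 0 (lt_trans hab' hb)]
      have hpw := List.isChain_iff_pairwise.mp hOchain
      have := List.pairwise_iff_get.mp hpw ⟨a, lt_trans hab' hb⟩ ⟨b, hb⟩ hab'
      simpa using this
  -- chain property of O'
  have key : ∀ i, i + 1 < O.length → O'.getD (i + 1) 0 ≤ O'.getD i 0 := by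
    intro i h
    rw [hg (i + 1), hg i]
    by_cases a1 : i + 1 = 2 * s + 1
    · rw [if_pos a1, if_neg (show i ≠ 2 * s + 1 by omega),
        if_neg (show i ≠ 2 * t by omega), show i = 2 * s from by omega]
      omega
    · rw [if_neg a1]
      by_cases a2 : i + 1 = 2 * t
      · rw [if_pos a2]
        by_cases b1 : i = 2 * s + 1
        · rw [if_pos b1]; omega
        · rw [if_neg b1, if_neg (show i ≠ 2 * t by omega),
            hval i (by omega) (by omega)]
          omega
      · rw [if_neg a2]
        by_cases b1 : i = 2 * s + 1
        · rw [if_pos b1, hval (i + 1) (by omega) (by omega)]; omega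
        · rw [if_neg b1]
          by_cases b2 : i = 2 * t
          · rw [if_pos b2, show i + 1 = 2 * t + 1 from by omega]; omega
          · rw [if_neg b2]; exact hmono i (i + 1) (Nat.le_succ i) h
  -- prefix sums
  have hps : ∀ n, (∑ m ∈ Finset.range n, O'.getD m 0) + (if 2 * t < n then 2 else 0)
      = (∑ m ∈ Finset.range n, O.getD m 0) + (if 2 * s + 1 < n then 2 else 0) := by
    intro n
    induction n with
    | zero => simp
    | succ n ih =>
      rw [Finset.sum_range_succ, Finset.sum_range_succ]
      have hgn := hg n
      by_cases e1 : n = 2 * s + 1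
      · rw [if_pos e1] at hgn
        have hOn : O.getD n 0 = O.getD (2 * t) 0 := by rw [e1]; exact hval1
        split_ifs at ih ⊢ <;> omega
      · rw [if_neg e1] at hgn
        by_cases e2 : n = 2 * t
        · rw [if_pos e2] at hgn
          have hOn : O.getD n 0 = O.getD (2 * t) 0 := by rw [e2]
          split_ifs at ih ⊢ <;> omega
        · rw [if_neg e2] at hgn
          split_ifs at ih ⊢ <;> omega
  refine ⟨⟨by rw [hlen']; exact hOeven, ?_, ?_⟩, ?_, ?_, ?_⟩
  · -- Chain'
    apply List.isChain_iff_getElem.mpr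
    intro i hi
    have h1 : i + 1 < O.length := by rw [hlen'] at hi; omega
    have hk := key i h1
    rw [List.getD_eq_getElem O' 0 (by rw [hlen']; omega),
      List.getD_eq_getElem O' 0 (by rw [hlen']; omega)] at hk
    simpa using hk
  · -- parity
    intro i hi
    rw [hlen'] at hi
    rw [hg (2 * i), hg (2 * i + 1), if_neg (show 2 * i ≠ 2 * s + 1 by omega)]
    by_cases e1 : 2 * i = 2 * t
    · rw [if_pos e1, if_neg (show 2 * i + 1 ≠ 2 * s + 1 by omega),
        if_neg (show 2 * i + 1 ≠ 2 * t by omega),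
        show 2 * i + 1 = 2 * t + 1 from by omega]
      exact ⟨k2 - 1, by omega⟩
    · rw [if_neg e1, if_neg (show 2 * i + 1 ≠ 2 * t by omega)]
      by_cases e2 : 2 * i + 1 = 2 * s + 1
      · rw [if_pos e2, show 2 * i = 2 * s from by omega]
        exact ⟨k1 + 1, by omega⟩
      · rw [if_neg e2]
        exact hOpar i (by omega)
  · -- sums equal
    have e1 : O'.sum = ∑ m ∈ Finset.range O.length, O'.getD m 0 := by
      rw [← take_sum_eq, ← hlen', List.take_length]
    have e2 : O.sum = ∑ m ∈ Finset.range O.length, O.getD m 0 := by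
      rw [← take_sum_eq, List.take_length]
    have h3 := hps O.length
    rw [if_pos (by omega), if_pos (by omega)] at h3
    omega
  · -- dominance
    intro n
    rw [take_sum_eq, take_sum_eq]
    have h3 := hps n
    split_ifs at h3 <;> omega
  · -- strict somewhere
    refine ⟨2 * s + 2, ?_⟩
    rw [take_sum_eq, take_sum_eq]
    have h3 := hps (2 * s + 2)
    rw [if_neg (by omega), if_pos (by omega)] at h3
    omega
end

section
/- Let O be a generic type C column sequence with chains C_1, …, C_l, and for each i let O_i be the type C column sequence whose chain decomposition is the single chain C_i. Then the map sending (O_1', …, O_l') ∈ Norm(O_1) × … × Norm(O_l) to the concatenated sequence O_1' O_2' … O_l' is a bijection onto Norm(O), and the chain decomposition of each member of Norm(O) is the concatenation of the chain decompositions of the corresponding O_i'. In particular |Norm(O)| = Π_{i=1}^l |Norm(O_i)|. -/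
-- basic degenAt lemmas

lemma degenAt_cons₄ (p q r s : ℕ) (rest : List ℕ) :
    degenAt (p::q::r::s::rest) 0 =
      (if (fundDeg p q r s).2.2.1 = 0 ∧ (fundDeg p q r s).2.2.2 = 0 then
        ((fundDeg p q r s).1 :: (fundDeg p q r s).2.1 :: (fundDeg p q r s).2.2.1 ::
          (fundDeg p q r s).2.2.2 :: rest).dropLast.dropLast
      else (fundDeg p q r s).1 :: (fundDeg p q r s).2.1 :: (fundDeg p q r s).2.2.1 ::
          (fundDeg p q r s).2.2.2 :: rest) := by
  simp [degenAt]

lemma degenAt_cons₄_nil (p q r s : ℕ) (h : (fundDeg p q r s).2.2.1 = 0 ∧ (fundDeg p q r s).2.2.2 = 0) :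
    degenAt [p,q,r,s] 0 = [(fundDeg p q r s).1, (fundDeg p q r s).2.1] := by
  rw [degenAt_cons₄, if_pos h]; rfl

lemma degenAt_cons₄' (p q r s : ℕ) (rest : List ℕ)
    (h : ¬((fundDeg p q r s).2.2.1 = 0 ∧ (fundDeg p q r s).2.2.2 = 0)) :
    degenAt (p::q::r::s::rest) 0 = (fundDeg p q r s).1 :: (fundDeg p q r s).2.1 ::
      (fundDeg p q r s).2.2.1 :: (fundDeg p q r s).2.2.2 :: rest := by
  rw [degenAt_cons₄, if_neg h]
lemma dropLast₂_cons₂ (x y : ℕ) (l : List ℕ) (h : 2 ≤ l.length) :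
    (x::y::l).dropLast.dropLast = x::y::l.dropLast.dropLast := by
  match l with
  | a :: b :: l' => simp only [List.dropLast_cons₂]

lemma degenAt_cons₂ (x y : ℕ) (c : List ℕ) (i : ℕ) (h : 2*i+3 < c.length) :
    degenAt (x::y::c) (i+1) = x :: y :: degenAt c i := by
  have g0 : (x::y::c).getD (2*(i+1)) 0 = c.getD (2*i) 0 := by
    rw [show 2*(i+1) = (2*i)+1+1 by ring]; simp
  have g1 : (x::y::c).getD (2*(i+1)+1) 0 = c.getD (2*i+1) 0 := by
    rw [show 2*(i+1)+1 = (2*i+1)+1+1 by ring]; simp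
  have g2 : (x::y::c).getD (2*(i+1)+2) 0 = c.getD (2*i+2) 0 := by
    rw [show 2*(i+1)+2 = (2*i+2)+1+1 by ring]; simp
  have g3 : (x::y::c).getD (2*(i+1)+3) 0 = c.getD (2*i+3) 0 := by
    rw [show 2*(i+1)+3 = (2*i+3)+1+1 by ring]; simp
  have ht : List.take (2*(i+1)) (x::y::c) = x::y::List.take (2*i) c := by
    rw [show 2*(i+1) = (2*i)+1+1 by ring]; simp
  have hd : List.drop (2*(i+1)+4) (x::y::c) = List.drop (2*i+4) c := by
    rw [show 2*(i+1)+4 = (2*i+4)+1+1 by ring]; simp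
  unfold degenAt
  rw [g0, g1, g2, g3, ht, hd]
  set q := fundDeg (c.getD (2*i) 0) (c.getD (2*i+1) 0) (c.getD (2*i+2) 0) (c.getD (2*i+3) 0) with hq
  by_cases hdel : q.2.2.1 = 0 ∧ q.2.2.2 = 0
  · simp only [if_pos hdel]
    rw [show x :: y :: List.take (2*i) c ++ [q.1, q.2.1, q.2.2.1, q.2.2.2] ++ List.drop (2*i+4) c
        = x :: y :: (List.take (2*i) c ++ [q.1, q.2.1, q.2.2.1, q.2.2.2] ++ List.drop (2*i+4) c) by simp]
    rw [dropLast₂_cons₂]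
    simp
    omega
  · simp only [if_neg hdel]
    simp

inductive Fam (t : ℕ) : Bool → ℕ → List ℕ → Prop
  | base (x y : ℕ) : t ≤ y → y ≤ x → x % 2 = y % 2 → (x = y → t = 0 ∧ 4 ≤ y) →
      Fam t false 0 [x, y]
  | keep (x u : ℕ) (rest : List ℕ) : Fam t false 0 (u::rest) → u < x → x % 2 = u % 2 →
      Fam t false 0 (x::u::u::rest)
  | coll (x u : ℕ) (z : List ℕ) : Fam t true u z → u + 2 ≤ x → x % 2 = u % 2 →
      Fam t false 0 (x::(u+2)::z)
  | cnil (u y : ℕ) : t ≤ y → y + 2 ≤ u → u % 2 = y % 2 → Fam t true u [u-2, y]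
  | cnilo (u : ℕ) : 4 ≤ u → t = 0 → Fam t true u [u-1, u-1]
  | ckeep (u v : ℕ) (rest : List ℕ) : Fam t false 0 (v::rest) → v + 2 ≤ u → u % 2 = v % 2 →
      Fam t true u ((u-2)::v::v::rest)
  | ccollk (u v : ℕ) (z : List ℕ) : Fam t true v z → v + 4 ≤ u → u % 2 = v % 2 →
      Fam t true u ((u-2)::(v+2)::z)
  | ccoll (u v : ℕ) (z : List ℕ) : Fam t true v z → v + 2 ≤ u → u % 2 = v % 2 →
      Fam t true u ((u+v)/2 :: (u+v)/2 :: z)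

lemma Fam.ne_nil {t b u c} (h : Fam t b u c) : c ≠ [] := by
  cases h <;> simp

lemma Fam.two_le_length {t b u c} (h : Fam t b u c) : 2 ≤ c.length := by
  cases h <;> simp <;> omega

lemma Fam.length_even {t b u c} (h : Fam t b u c) : Even c.length := by
  induction h with
  | base => exact ⟨1, rfl⟩
  | keep x u rest _ _ _ ih => simpa [List.length_cons] using Even.add ih ⟨1, rfl⟩
  | coll x u z _ _ _ ih => simpa [List.length_cons] using Even.add ih ⟨1, rfl⟩
  | cnil => exact ⟨1, rfl⟩
  | cnilo => exact ⟨1, rfl⟩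
  | ckeep u v rest _ _ _ ih => simpa [List.length_cons] using Even.add ih ⟨1, rfl⟩
  | ccollk u v z _ _ _ ih => simpa [List.length_cons] using Even.add ih ⟨1, rfl⟩
  | ccoll u v z _ _ _ ih => simpa [List.length_cons] using Even.add ih ⟨1, rfl⟩

lemma Fam.head_pos {t u c} (h : Fam t false u c) : 1 ≤ c.headI := by
  cases h with
  | base x y h1 h2 h3 h4 =>
    simp only [List.headI]
    rcases Nat.eq_or_lt_of_le h2 with h | h
    · rcases h4 h.symm with ⟨_, h5⟩; omega
    · omega
  | keep x u rest _ h2 _ => simp only [List.headI]; omega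
  | coll x u z _ h2 _ => simp only [List.headI]; omega

lemma Fam.head_le {t u c} (h : Fam t true u c) : c.headI ≤ u := by
  cases h <;> simp only [List.headI] <;> omega

lemma getLast?_cons_of_ne_nil (a : ℕ) {z : List ℕ} (h : z ≠ []) : (a::z).getLast? = z.getLast? := by
  rw [List.getLast?_cons]
  cases hz : z.getLast? with
  | none => exact absurd (List.getLast?_eq_none_iff.mp hz) h
  | some w => rfl

lemma Fam.last_ge {t b u c} (h : Fam t b u c) : ∀ y, c.getLast? = some y → t ≤ y := by
  induction h with
  | base x y h1 => intro w hw; simp at hw; omega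
  | keep x u rest h _ _ ih =>
    intro w hw; rw [List.getLast?_cons_cons, List.getLast?_cons_cons] at hw; exact ih w hw
  | coll x u z h _ _ ih =>
    intro w hw; rw [List.getLast?_cons_cons, getLast?_cons_of_ne_nil _ h.ne_nil] at hw
    exact ih w hw
  | cnil u y h1 => intro w hw; simp at hw; omega
  | cnilo u h1 h2 => intro w hw; simp at hw; omega
  | ckeep u v rest h _ _ ih =>
    intro w hw
    rw [List.getLast?_cons_cons, List.getLast?_cons_cons] at hw; exact ih w hw
  | ccollk u v z h _ _ ih =>
    intro w hw; rw [List.getLast?_cons_cons, getLast?_cons_of_ne_nil _ h.ne_nil] at hw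
    exact ih w hw
  | ccoll u v z h _ _ ih =>
    intro w hw; rw [List.getLast?_cons_cons, getLast?_cons_of_ne_nil _ h.ne_nil] at hw
    exact ih w hw

lemma getD_cons₂' (x y : ℕ) (l : List ℕ) (i k : ℕ) :
    (x::y::l).getD (2*(i+1)+k) 0 = l.getD (2*i+k) 0 := by
  rw [show 2*(i+1)+k = (2*i+k)+1+1 by ring]; simp

lemma headI_eq_cons {l : List ℕ} {a : ℕ} (h : l.headI = a) (hne : l ≠ []) :
    l = a :: l.tail := by
  cases l with
  | nil => exact absurd rfl hne
  | cons b l' => simp at h; simp [h]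

lemma Fam.step {t : ℕ} {b u c} (h : Fam t b u c) : ∀ i, 2*i+3 < c.length →
    c.getD (2*i+1) 0 = c.getD (2*i+2) 0 →
    Fam t b u (degenAt c i) ∧ (b = false → (degenAt c i).headI = c.headI) ∧
      (1 ≤ t → (degenAt c i).length = c.length) := by
  induction h with
  | base x y h1 h2 h3 h4 => intro i hlen heq; simp at hlen
  | cnil u y h1 h2 h3 => intro i hlen heq; simp at hlen
  | cnilo u h1 h2 => intro i hlen heq; simp at hlen
  | keep x u rest hi hux hpar ih =>
    intro i hlen heq
    cases i with
    | zero =>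
      clear ih heq
      cases hi with
      | base u' y h1 h2 h3 h4 =>
        -- c = [x, u, u, y]  (rest = [y])
        rcases Nat.eq_or_lt_of_le h2 with hEq | hLt
        · -- u = y (y = u), quad (x,u,u,u) → (x, u+2, u-1, u-1)
          obtain ⟨ht0, hy4⟩ := h4 hEq.symm
          subst hEq
          have hfd : fundDeg x y y y = (x, y+2, y-1, y-1) := by
            unfold fundDeg; rw [if_neg (by omega), if_pos rfl]
          have hnd : ¬((fundDeg x y y y).2.2.1 = 0 ∧ (fundDeg x y y y).2.2.2 = 0) := by
            rw [hfd]; simp; omega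
          rw [degenAt_cons₄' _ _ _ _ _ hnd, hfd]
          refine ⟨Fam.coll x y [y-1,y-1] (Fam.cnilo y hy4 ht0) (by omega) (by omega), by simp, by simp⟩
        · -- u > y, quad (x,u,u,y) → (x, u+2, u-2, y)
          have hfd : fundDeg x u u y = (x, u+2, u-2, y) := by
            unfold fundDeg; rw [if_neg (by omega), if_neg (by omega)]
          by_cases hdel : u = 2 ∧ y = 0
          · obtain ⟨hu2, hy0⟩ := hdel
            subst hu2; subst hy0
            have hd : (fundDeg x 2 2 0).2.2.1 = 0 ∧ (fundDeg x 2 2 0).2.2.2 = 0 := by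
              rw [hfd]; exact ⟨rfl, rfl⟩
            have := degenAt_cons₄_nil x 2 2 0 hd
            rw [this, hfd]
            refine ⟨Fam.base x 4 (by omega) (by omega) (by omega) (by omega), by simp, by simp; omega⟩
          · have hnd : ¬((fundDeg x u u y).2.2.1 = 0 ∧ (fundDeg x u u y).2.2.2 = 0) := by
              rw [hfd]; simp; omega
            rw [degenAt_cons₄' _ _ _ _ _ hnd, hfd]
            exact ⟨Fam.coll x u [u-2,y] (Fam.cnil u y h1 (by omega) (by omega)) (by omega) (by omega),
              by simp, by simp⟩
      | keep u0 v rest' hi2 hvu hpar2 =>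
        -- c = x::u::u::v::v::rest'
        have hv1 : 1 ≤ v := by simpa using hi2.head_pos
        have hfd : fundDeg x u u v = (x, u+2, u-2, v) := by
          unfold fundDeg; rw [if_neg (by omega), if_neg (by omega)]
        have hnd : ¬((fundDeg x u u v).2.2.1 = 0 ∧ (fundDeg x u u v).2.2.2 = 0) := by
          rw [hfd]; simp; omega
        rw [degenAt_cons₄' _ _ _ _ _ hnd, hfd]
        exact ⟨Fam.coll x u _ (Fam.ckeep u v rest' hi2 (by omega) (by omega)) (by omega) (by omega),
          by simp, by simp⟩
      | coll u0 v z hz hvu hpar2 =>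
        -- c = x::u::u::(v+2)::z
        rcases Nat.eq_or_lt_of_le hvu with hEq | hLt
        · -- u = v+2, quad (x,u,u,u)
          have hfd : fundDeg x u u (v+2) = (x, u+2, u-1, u-1) := by
            unfold fundDeg; rw [if_neg (by omega), if_pos (by omega)]
            rw [show u - 1 = v + 2 - 1 by omega]
          have hnd : ¬((fundDeg x u u (v+2)).2.2.1 = 0 ∧ (fundDeg x u u (v+2)).2.2.2 = 0) := by
            rw [hfd]; simp; omega
          rw [degenAt_cons₄' _ _ _ _ _ hnd, hfd]
          refine ⟨Fam.coll x u ((u-1)::(u-1)::z) ?_ (by omega) (by omega), by simp, by simp⟩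
          have : u - 1 = (u + v)/2 := by omega
          rw [this]
          exact Fam.ccoll u v z hz (by omega) (by omega)
        · -- u > v+2
          have hfd : fundDeg x u u (v+2) = (x, u+2, u-2, v+2) := by
            unfold fundDeg; rw [if_neg (by omega), if_neg (by omega)]
          have hnd : ¬((fundDeg x u u (v+2)).2.2.1 = 0 ∧ (fundDeg x u u (v+2)).2.2.2 = 0) := by
            rw [hfd]; simp
          rw [degenAt_cons₄' _ _ _ _ _ hnd, hfd]
          have hpar3 : u % 2 = v % 2 := by omega
          exact ⟨Fam.coll x u _ (Fam.ccollk u v z hz (by omega) hpar3) (by omega) (by omega),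
            by simp, by simp⟩
    | succ i' =>
      have hlen' : 2*i'+3 < (u::rest).length := by simp at hlen ⊢; omega
      have heq' : (u::rest).getD (2*i'+1) 0 = (u::rest).getD (2*i'+2) 0 := by
        rw [← getD_cons₂' x u (u::rest) i' 1, ← getD_cons₂' x u (u::rest) i' 2]; exact heq
      obtain ⟨hF, hH, hL⟩ := ih i' hlen' heq'
      rw [degenAt_cons₂ x u (u::rest) i' hlen']
      have hsh := headI_eq_cons (by simpa using hH) hF.ne_nil
      refine ⟨?_, by simp, ?_⟩
      · rw [hsh]; exact Fam.keep x u _ (hsh ▸ hF) hux hpar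
      · intro ht; have := hL ht; simp at this ⊢; omega
  | coll x u z hz hle hpar ih =>
    intro i hlen heq
    cases i with
    | zero =>
      exfalso
      have h2 : ((x::(u+2)::z : List ℕ)).getD 2 0 = z.headI := by
        cases z with
        | nil => exact absurd rfl hz.ne_nil
        | cons a z' => rfl
      have h1 : ((x::(u+2)::z : List ℕ)).getD 1 0 = u + 2 := rfl
      rw [h1, h2] at heq
      have := hz.head_le
      omega
    | succ i' =>
      have hlen' : 2*i'+3 < z.length := by simp at hlen ⊢; omega
      have heq' : z.getD (2*i'+1) 0 = z.getD (2*i'+2) 0 := by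
        rw [← getD_cons₂' x (u+2) z i' 1, ← getD_cons₂' x (u+2) z i' 2]; exact heq
      obtain ⟨hF, hH, hL⟩ := ih i' hlen' heq'
      rw [degenAt_cons₂ x (u+2) z i' hlen']
      refine ⟨Fam.coll x u _ hF hle hpar, by simp, ?_⟩
      intro ht; have := hL ht; simp at this ⊢; omega
  | ckeep u v rest hi hvu hpar ih =>
    intro i hlen heq
    cases i with
    | zero =>
      clear heq ih
      cases hi with
      | base v0 y h1 h2 h3 h4 =>
        rcases Nat.eq_or_lt_of_le h2 with hEq | hLt
        · -- y = v
          obtain ⟨ht0, hy4⟩ := h4 hEq.symm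
          subst hEq
          by_cases hu : u = y + 2
          · subst hu
            simp only [Nat.add_sub_cancel]
            have hfd : fundDeg y y y y = (y+1, y+1, y-1, y-1) := by
              unfold fundDeg; rw [if_pos rfl, if_pos rfl]
            have hnd : ¬((fundDeg y y y y).2.2.1 = 0 ∧ (fundDeg y y y y).2.2.2 = 0) := by
              rw [hfd]; simp; omega
            rw [degenAt_cons₄' _ _ _ _ _ hnd, hfd]
            refine ⟨?_, by simp, by simp⟩
            rw [show y+1 = (y+2+y)/2 by omega]
            exact Fam.ccoll (y+2) y _ (Fam.cnilo y hy4 ht0) (by omega) (by omega)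
          · have hfd : fundDeg (u-2) y y y = (u-2, y+2, y-1, y-1) := by
              unfold fundDeg; rw [if_neg (by omega), if_pos rfl]
            have hnd : ¬((fundDeg (u-2) y y y).2.2.1 = 0 ∧ (fundDeg (u-2) y y y).2.2.2 = 0) := by
              rw [hfd]; simp; omega
            rw [degenAt_cons₄' _ _ _ _ _ hnd, hfd]
            exact ⟨Fam.ccollk u y _ (Fam.cnilo y hy4 ht0) (by omega) (by omega), by simp, by simp⟩
        · -- y < v
          by_cases hu : u = v + 2
          · subst hu
            simp only [Nat.add_sub_cancel]
            have hfd : fundDeg v v v y = (v+1, v+1, v-2, y) := by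
              unfold fundDeg; rw [if_pos rfl, if_neg (by omega)]
            by_cases hdel : v = 2 ∧ y = 0
            · obtain ⟨hv2, hy0⟩ := hdel
              subst hv2; subst hy0
              have hd : (fundDeg 2 2 2 0).2.2.1 = 0 ∧ (fundDeg 2 2 2 0).2.2.2 = 0 := by
                rw [hfd]; exact ⟨rfl, rfl⟩
              rw [degenAt_cons₄_nil _ _ _ _ hd, hfd]
              refine ⟨?_, by simp, by simp; omega⟩
              have h33 : ((2:ℕ)+1) = 2+2-1 := rfl
              rw [h33]
              exact Fam.cnilo (2+2) (by omega) (by omega)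
            · have hnd : ¬((fundDeg v v v y).2.2.1 = 0 ∧ (fundDeg v v v y).2.2.2 = 0) := by
                rw [hfd]; simp; omega
              rw [degenAt_cons₄' _ _ _ _ _ hnd, hfd]
              refine ⟨?_, by simp, by simp⟩
              rw [show v+1 = (v+2+v)/2 by omega]
              exact Fam.ccoll (v+2) v _ (Fam.cnil v y h1 (by omega) (by omega)) (by omega) (by omega)
          · have hfd : fundDeg (u-2) v v y = (u-2, v+2, v-2, y) := by
              unfold fundDeg; rw [if_neg (by omega), if_neg (by omega)]
            by_cases hdel : v = 2 ∧ y = 0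
            · obtain ⟨hv2, hy0⟩ := hdel
              subst hv2; subst hy0
              have hd : (fundDeg (u-2) 2 2 0).2.2.1 = 0 ∧ (fundDeg (u-2) 2 2 0).2.2.2 = 0 := by
                rw [hfd]; exact ⟨rfl, rfl⟩
              rw [degenAt_cons₄_nil _ _ _ _ hd, hfd]
              exact ⟨Fam.cnil u (2+2) (by omega) (by omega) (by omega), by simp, by simp; omega⟩
            · have hnd : ¬((fundDeg (u-2) v v y).2.2.1 = 0 ∧ (fundDeg (u-2) v v y).2.2.2 = 0) := by
                rw [hfd]; simp; omega
              rw [degenAt_cons₄' _ _ _ _ _ hnd, hfd]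
              exact ⟨Fam.ccollk u v _ (Fam.cnil v y h1 (by omega) (by omega)) (by omega) (by omega),
                by simp, by simp⟩
      | keep v0 w rest'' hi2 hwv hpar2 =>
        have hw1 : 1 ≤ w := by simpa using hi2.head_pos
        by_cases hu : u = v + 2
        · subst hu
          simp only [Nat.add_sub_cancel]
          have hfd : fundDeg v v v w = (v+1, v+1, v-2, w) := by
            unfold fundDeg; rw [if_pos rfl, if_neg (by omega)]
          have hnd : ¬((fundDeg v v v w).2.2.1 = 0 ∧ (fundDeg v v v w).2.2.2 = 0) := by
            rw [hfd]; simp; omega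
          rw [degenAt_cons₄' _ _ _ _ _ hnd, hfd]
          refine ⟨?_, by simp, by simp⟩
          rw [show v+1 = (v+2+v)/2 by omega]
          exact Fam.ccoll (v+2) v _ (Fam.ckeep v w rest'' hi2 (by omega) (by omega)) (by omega) (by omega)
        · have hfd : fundDeg (u-2) v v w = (u-2, v+2, v-2, w) := by
            unfold fundDeg; rw [if_neg (by omega), if_neg (by omega)]
          have hnd : ¬((fundDeg (u-2) v v w).2.2.1 = 0 ∧ (fundDeg (u-2) v v w).2.2.2 = 0) := by
            rw [hfd]; simp; omega
          rw [degenAt_cons₄' _ _ _ _ _ hnd, hfd]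
          exact ⟨Fam.ccollk u v _ (Fam.ckeep v w rest'' hi2 (by omega) (by omega)) (by omega) (by omega),
            by simp, by simp⟩
      | coll v0 w z' hz' hwv hpar2 =>
        by_cases hu : u = v + 2
        · subst hu
          simp only [Nat.add_sub_cancel]
          by_cases hw : v = w + 2
          · have hfd : fundDeg v v v (w+2) = (v+1, v+1, v-1, v-1) := by
              unfold fundDeg; rw [if_pos rfl, if_pos (by omega)]
              rw [show v - 1 = w + 2 - 1 by omega]
            have hnd : ¬((fundDeg v v v (w+2)).2.2.1 = 0 ∧ (fundDeg v v v (w+2)).2.2.2 = 0) := by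
              rw [hfd]; simp; omega
            rw [degenAt_cons₄' _ _ _ _ _ hnd, hfd]
            refine ⟨?_, by simp, by simp⟩
            rw [show v+1 = (v+2+v)/2 by omega]
            refine Fam.ccoll (v+2) v _ ?_ (by omega) (by omega)
            rw [show v-1 = (v+w)/2 by omega]
            exact Fam.ccoll v w z' hz' (by omega) (by omega)
          · have hfd : fundDeg v v v (w+2) = (v+1, v+1, v-2, w+2) := by
              unfold fundDeg; rw [if_pos rfl, if_neg (by omega)]
            have hnd : ¬((fundDeg v v v (w+2)).2.2.1 = 0 ∧ (fundDeg v v v (w+2)).2.2.2 = 0) := by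
              rw [hfd]; simp
            rw [degenAt_cons₄' _ _ _ _ _ hnd, hfd]
            refine ⟨?_, by simp, by simp⟩
            rw [show v+1 = (v+2+v)/2 by omega]
            exact Fam.ccoll (v+2) v _ (Fam.ccollk v w z' hz' (by omega) (by omega)) (by omega) (by omega)
        · by_cases hw : v = w + 2
          · have hfd : fundDeg (u-2) v v (w+2) = (u-2, v+2, v-1, v-1) := by
              unfold fundDeg; rw [if_neg (by omega), if_pos (by omega)]
              rw [show v - 1 = w + 2 - 1 by omega]
            have hnd : ¬((fundDeg (u-2) v v (w+2)).2.2.1 = 0 ∧ (fundDeg (u-2) v v (w+2)).2.2.2 = 0) := by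
              rw [hfd]; simp; omega
            rw [degenAt_cons₄' _ _ _ _ _ hnd, hfd]
            refine ⟨?_, by simp, by simp⟩
            refine Fam.ccollk u v _ ?_ (by omega) (by omega)
            rw [show v-1 = (v+w)/2 by omega]
            exact Fam.ccoll v w z' hz' (by omega) (by omega)
          · have hfd : fundDeg (u-2) v v (w+2) = (u-2, v+2, v-2, w+2) := by
              unfold fundDeg; rw [if_neg (by omega), if_neg (by omega)]
            have hnd : ¬((fundDeg (u-2) v v (w+2)).2.2.1 = 0 ∧ (fundDeg (u-2) v v (w+2)).2.2.2 = 0) := by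
              rw [hfd]; simp
            rw [degenAt_cons₄' _ _ _ _ _ hnd, hfd]
            exact ⟨Fam.ccollk u v _ (Fam.ccollk v w z' hz' (by omega) (by omega)) (by omega) (by omega),
              by simp, by simp⟩
    | succ i' =>
      have hlen' : 2*i'+3 < (v::rest).length := by simp at hlen ⊢; omega
      have heq' : (v::rest).getD (2*i'+1) 0 = (v::rest).getD (2*i'+2) 0 := by
        rw [← getD_cons₂' (u-2) v (v::rest) i' 1, ← getD_cons₂' (u-2) v (v::rest) i' 2]; exact heq
      obtain ⟨hF, hH, hL⟩ := ih i' hlen' heq'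
      rw [degenAt_cons₂ (u-2) v (v::rest) i' hlen']
      have hsh := headI_eq_cons (by simpa using hH rfl) hF.ne_nil
      refine ⟨?_, by simp, ?_⟩
      · rw [hsh]; exact Fam.ckeep u v _ (hsh ▸ hF) hvu hpar
      · intro ht; have := hL ht; simp at this ⊢; omega
  | ccollk u v z hz hle hpar ih =>
    intro i hlen heq
    cases i with
    | zero =>
      exfalso
      have h2 : (((u-2)::(v+2)::z : List ℕ)).getD 2 0 = z.headI := by
        cases z with
        | nil => exact absurd rfl hz.ne_nil
        | cons a z' => rfl
      have h1 : (((u-2)::(v+2)::z : List ℕ)).getD 1 0 = v + 2 := rfl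
      rw [h1, h2] at heq
      have := hz.head_le
      omega
    | succ i' =>
      have hlen' : 2*i'+3 < z.length := by simp at hlen ⊢; omega
      have heq' : z.getD (2*i'+1) 0 = z.getD (2*i'+2) 0 := by
        rw [← getD_cons₂' (u-2) (v+2) z i' 1, ← getD_cons₂' (u-2) (v+2) z i' 2]; exact heq
      obtain ⟨hF, hH, hL⟩ := ih i' hlen' heq'
      rw [degenAt_cons₂ (u-2) (v+2) z i' hlen']
      refine ⟨Fam.ccollk u v _ hF hle hpar, by simp, ?_⟩
      intro ht; have := hL ht; simp at this ⊢; omega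
  | ccoll u v z hz hle hpar ih =>
    intro i hlen heq
    cases i with
    | zero =>
      exfalso
      have h2 : (((u+v)/2::(u+v)/2::z : List ℕ)).getD 2 0 = z.headI := by
        cases z with
        | nil => exact absurd rfl hz.ne_nil
        | cons a z' => rfl
      have h1 : (((u+v)/2::(u+v)/2::z : List ℕ)).getD 1 0 = (u+v)/2 := rfl
      rw [h1, h2] at heq
      have := hz.head_le
      omega
    | succ i' =>
      have hlen' : 2*i'+3 < z.length := by simp at hlen ⊢; omega
      have heq' : z.getD (2*i'+1) 0 = z.getD (2*i'+2) 0 := by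
        rw [← getD_cons₂' ((u+v)/2) ((u+v)/2) z i' 1, ← getD_cons₂' ((u+v)/2) ((u+v)/2) z i' 2]
        exact heq
      obtain ⟨hF, hH, hL⟩ := ih i' hlen' heq'
      rw [degenAt_cons₂ ((u+v)/2) ((u+v)/2) z i' hlen']
      refine ⟨Fam.ccoll u v _ hF hle hpar, by simp, ?_⟩
      intro ht; have := hL ht; simp at this ⊢; omega


def lastI (l : List ℕ) : ℕ := (l.getLast?).getD 0

@[simp] lemma lastI_pair (x y : ℕ) : lastI [x, y] = y := rfl

@[simp] lemma lastI_cons_cons (a b : ℕ) (l : List ℕ) : lastI (a::b::l) = lastI (b::l) := by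
  simp [lastI]

lemma lastI_cons_of_ne_nil (a : ℕ) {l : List ℕ} (h : l ≠ []) : lastI (a::l) = lastI l := by
  simp [lastI, getLast?_cons_of_ne_nil a h]

lemma lastI_append (A B : List ℕ) (h : B ≠ []) : lastI (A ++ B) = lastI B := by
  simp only [lastI, List.getLast?_append]
  cases hB : B.getLast? with
  | none => exact absurd (List.getLast?_eq_none_iff.mp hB) h
  | some y => simp

lemma Fam.last_ge' {t b u c} (h : Fam t b u c) : t ≤ lastI c := by
  cases hc : c.getLast? with
  | none => exact absurd (List.getLast?_eq_none_iff.mp hc) h.ne_nil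
  | some y => simpa [lastI, hc] using h.last_ge y hc

lemma headI_flatten_cons (f : List ℕ) (fs : List (List ℕ)) (h : f ≠ []) :
    (List.flatten (f::fs)).headI = f.headI := by
  cases f with
  | nil => exact absurd rfl h
  | cons x f' => rfl

lemma chains_cons_eq (a b : ℕ) (rest : List ℕ) :
    chains (a::b::rest) = (match chains rest with
      | [] => [[a, b]]
      | C :: L => if C.headI < b then [a, b] :: C :: L else (a :: b :: C) :: L) := rfl

@[simp] lemma chains_nil : chains [] = [] := rfl
@[simp] lemma chains_singleton (x : ℕ) : chains [x] = [] := rfl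

lemma chains_cons_shape (a b : ℕ) (rest : List ℕ) :
    ∃ C' L, chains (a::b::rest) = (a :: b :: C') :: L := by
  rw [chains_cons_eq]
  cases h : chains rest with
  | nil => exact ⟨[], [], rfl⟩
  | cons C L =>
    dsimp only
    by_cases hb : C.headI < b
    · rw [if_pos hb]; exact ⟨[], C::L, rfl⟩
    · rw [if_neg hb]; exact ⟨C, L, rfl⟩

lemma chains_cons_ne_nil (a b : ℕ) (rest : List ℕ) : chains (a::b::rest) ≠ [] := by
  obtain ⟨C', L, h⟩ := chains_cons_shape a b rest
  rw [h]; simp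

lemma chains_eq_nil_of_even {c : List ℕ} (he : Even c.length) (h : chains c = []) : c = [] := by
  match c with
  | [] => rfl
  | [x] => simp at he
  | a::b::r => exact absurd h (chains_cons_ne_nil a b r)

def MergeEq (B : List ℕ) : Prop := ∀ i, 2*i+2 < B.length → B.getD (2*i+1) 0 = B.getD (2*i+2) 0
def PairPar (B : List ℕ) : Prop := ∀ i, 2*i+1 < B.length → (B.getD (2*i) 0) % 2 = (B.getD (2*i+1) 0) % 2

lemma getD_cons₂0 (x y : ℕ) (l : List ℕ) (i : ℕ) :
    (x::y::l).getD (2*(i+1)) 0 = l.getD (2*i) 0 := by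
  rw [show 2*(i+1) = (2*i)+1+1 by ring]; simp

lemma pairpar_tail₂ {a b : ℕ} {rest : List ℕ} (h : PairPar (a::b::rest)) : PairPar rest := by
  intro i hi
  have := h (i+1) (by simp; omega)
  rw [getD_cons₂0 a b rest i, getD_cons₂' a b rest i 1] at this
  exact this

lemma mergeEq_tail₂ {a b : ℕ} {rest : List ℕ} (h : MergeEq (a::b::rest)) : MergeEq rest := by
  intro i hi
  have := h (i+1) (by simp; omega)
  rw [getD_cons₂' a b rest i 1, getD_cons₂' a b rest i 2] at this
  exact this

lemma chains_spec : ∀ (n : ℕ) (O : List ℕ), O.length ≤ n → Even O.length →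
    O.Chain' (· ≥ ·) → PairPar O →
    (chains O).flatten = O ∧
    (∀ B ∈ chains O, B ≠ [] ∧ Even B.length ∧ MergeEq B ∧ PairPar B) ∧
    List.Chain' (fun X Y => Y.headI < lastI X) (chains O) := by
  intro n
  induction n with
  | zero =>
    intro O hn _ _ _
    have : O = [] := List.length_eq_zero_iff.mp (by omega)
    subst this
    refine ⟨rfl, ?_, ?_⟩
    · intro B hB; rw [show chains ([]:List ℕ) = [] from rfl] at hB; simp at hB
    · rw [show chains ([]:List ℕ) = [] from rfl]; exact List.isChain_nil
  | succ n ih =>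
    intro O hn he hs hp
    match O with
    | [] =>
      refine ⟨rfl, ?_, ?_⟩
      · intro B hB; rw [show chains ([]:List ℕ) = [] from rfl] at hB; simp at hB
      · rw [show chains ([]:List ℕ) = [] from rfl]; exact List.isChain_nil
    | [x] => simp at he
    | a::b::rest =>
      have hab : b ≤ a := (List.isChain_cons_cons.mp hs).1
      have hsr : rest.Chain' (· ≥ ·) := ((List.isChain_cons_cons.mp hs).2).tail
      have hpr : PairPar rest := pairpar_tail₂ hp
      have her : Even rest.length := by simp at he ⊢; rcases he with ⟨k,hk⟩; exact ⟨k-1, by omega⟩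
      have hnr : rest.length ≤ n := by simp at hn; omega
      obtain ⟨hfl, hblk, hbd⟩ := ih rest hnr her hsr hpr
      have hparab : a % 2 = b % 2 := by
        have := hp 0 (by simp)
        simpa using this
      rw [chains_cons_eq]
      cases hc : chains rest with
      | nil =>
        have : rest = [] := chains_eq_nil_of_even her hc
        subst this
        refine ⟨rfl, ?_, List.isChain_singleton _⟩
        intro B hB
        simp at hB
        subst hB
        refine ⟨by simp, ⟨1, rfl⟩, ?_, ?_⟩
        · intro i hi; exfalso; simp at hi <;> omega
        · intro i hi
          have : i = 0 := by simp at hi; omega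
          subst this
          simpa using hparab
      | cons C L =>
        dsimp only
        -- rest is nonempty with ≥ 2 elements
        have hrest2 : ∃ r0 r1 rest'', rest = r0::r1::rest'' := by
          cases rest with
          | nil => rw [show chains ([]:List ℕ) = [] from rfl] at hc; exact absurd hc.symm (by simp)
          | cons r0 rest1 =>
            cases rest1 with
            | nil => simp at her
            | cons r1 rest'' => exact ⟨r0, r1, rest'', rfl⟩
        obtain ⟨r0, r1, rest'', hre⟩ := hrest2
        rw [hre] at hs
        have hheadC : C.headI = r0 := by
          obtain ⟨C', L', hsh⟩ := chains_cons_shape r0 r1 rest''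
          rw [hre, hsh] at hc
          cases hc; rfl
        have hbr0 : r0 ≤ b := (List.isChain_cons_cons.mp (List.isChain_cons_cons.mp hs).2).1
        by_cases hlt : C.headI < b
        · rw [if_pos hlt]
          rw [hc] at hfl hblk hbd
          refine ⟨by simpa using hfl, ?_, ?_⟩
          · intro B hB
            rw [List.mem_cons] at hB
            rcases hB with hB | hB
            · subst hB
              refine ⟨by simp, ⟨1, rfl⟩, fun i hi => by exfalso; simp at hi <;> omega, fun i hi => ?_⟩
              have : i = 0 := by simp at hi; omega
              subst this
              simpa using hparab
            · exact hblk B hB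
          · simp only [List.Chain', List.isChain_cons_cons]
            exact ⟨by simpa [lastI] using hlt, hbd⟩
        · rw [if_neg hlt]
          have hb0 : C.headI = b := by omega
          rw [hc] at hfl hblk hbd
          obtain ⟨hCne, hCev, hCme, hCpp⟩ := hblk C (by simp)
          refine ⟨?_, ?_, ?_⟩
          · simpa using hfl
          · intro B hB
            rw [List.mem_cons] at hB
            rcases hB with hB | hB
            · subst hB
              refine ⟨by simp, by simpa [Nat.even_add] using hCev, ?_, ?_⟩
              · intro i hi
                cases i with
                | zero =>
                  have : (a::b::C).getD 2 0 = C.headI := by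
                    cases C with
                    | nil => exact absurd rfl hCne
                    | cons c0 C' => rfl
                  rw [this, hb0]; rfl
                | succ i' =>
                  rw [getD_cons₂' a b C i' 1, getD_cons₂' a b C i' 2]
                  exact hCme i' (by simp at hi ⊢; omega)
              · intro i hi
                cases i with
                | zero => simpa using hparab
                | succ i' =>
                  rw [getD_cons₂0 a b C i', getD_cons₂' a b C i' 1]
                  exact hCpp i' (by simp at hi ⊢; omega)
            · exact hblk B (List.mem_cons_of_mem C hB)
          · cases L with
            | nil => exact List.isChain_singleton _
            | cons D L' =>
              simp only [List.Chain', List.isChain_cons_cons] at hbd ⊢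
              refine ⟨?_, hbd.2⟩
              rw [lastI_cons_cons, lastI_cons_of_ne_nil b hCne]
              exact hbd.1

lemma flatten_chains {O : List ℕ} (he : Even O.length) (hs : O.Chain' (· ≥ ·)) (hp : PairPar O) :
    (chains O).flatten = O :=
  (chains_spec O.length O le_rfl he hs hp).1

lemma chains_append : ∀ (n : ℕ) (A B : List ℕ), A.length ≤ n → Even A.length → A ≠ [] →
    (B = [] ∨ B.headI < lastI A) → chains (A ++ B) = chains A ++ chains B := by
  intro n
  induction n with
  | zero => intro A B hn _ hne _; exact absurd (List.length_eq_zero_iff.mp (by omega)) hne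
  | succ n ih =>
    intro A B hn he hne hB
    match A with
    | [] => exact absurd rfl hne
    | [x] => simp at he
    | [x, y, z] => obtain ⟨k, hk⟩ := he; simp at hk; omega
    | [a, b] =>
      rcases hB with hB | hB
      · subst hB; simp
      · match B with
        | [] => simp
        | [x] =>
          rw [show ([a,b] : List ℕ) ++ [x] = a::b::[x] by rfl, chains_cons_eq]
          rw [show chains [x] = [] from rfl]
          rfl
        | x::y::B' =>
          rw [show ([a,b] : List ℕ) ++ (x::y::B') = a::b::(x::y::B') by rfl, chains_cons_eq]
          obtain ⟨C', L, hsh⟩ := chains_cons_shape x y B'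
          rw [hsh]
          dsimp only
          rw [if_pos (by simpa [lastI] using hB)]
          rw [show chains [a,b] = [[a,b]] from rfl, ← hsh]
          rfl
    | a::b::a2::b2::A3 =>
      have he2 : Even (a2::b2::A3).length := by simp at he ⊢; rcases he with ⟨k,hk⟩; exact ⟨k-1, by omega⟩
      have ihh := ih (a2::b2::A3) B (by simp at hn ⊢; omega) he2 (by simp)
        (by rcases hB with hB | hB; exact Or.inl hB; right; simpa using hB)
      obtain ⟨C', L, hsh⟩ := chains_cons_shape a2 b2 A3
      rw [show (a::b::a2::b2::A3) ++ B = a::b::((a2::b2::A3) ++ B) by simp]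
      rw [chains_cons_eq a b ((a2::b2::A3) ++ B), ihh, hsh]
      rw [chains_cons_eq a b (a2::b2::A3), hsh]
      simp only [List.cons_append]
      by_cases hlt : (a2::b2::C').headI < b
      · rw [if_pos hlt, if_pos hlt]; simp
      · rw [if_neg hlt, if_neg hlt]; simp


lemma NormMem.trans {A B C : List ℕ} (h1 : NormMem A B) (h2 : NormMem B C) : NormMem A C := by
  induction h2 with
  | base => exact h1
  | step c i hc hlen heq ih => exact NormMem.step c i ih hlen heq

inductive GS : List ℕ → Prop
  | base (x y : ℕ) : y < x → x % 2 = y % 2 → GS [x,y]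
  | cons (x u : ℕ) (rest : List ℕ) : GS (u::rest) → u < x → x % 2 = u % 2 → GS (x::u::u::rest)

lemma GS.fam {B : List ℕ} (h : GS B) : Fam (lastI B) false 0 B := by
  induction h with
  | base x y hlt hpar =>
    exact Fam.base x y le_rfl (le_of_lt hlt) hpar (fun hxy => absurd hxy (by omega))
  | cons x u rest hgs hlt hpar ih =>
    rw [lastI_cons_cons, lastI_cons_cons]
    exact Fam.keep x u rest ih hlt hpar

lemma GS_of_block : ∀ (n : ℕ) (B : List ℕ), B.length ≤ n → B ≠ [] → Even B.length →
    MergeEq B → PairPar B → (∀ i, 2*i+1 < B.length → B.getD (2*i+1) 0 < B.getD (2*i) 0) →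
    GS B := by
  intro n
  induction n with
  | zero => intro B hn hne _ _ _ _; exact absurd (List.length_eq_zero_iff.mp (by omega)) hne
  | succ n ih =>
    intro B hn hne he hme hpp hst
    match B with
    | [] => exact absurd rfl hne
    | [x] => simp at he
    | [x, y] =>
      refine GS.base x y ?_ ?_
      · simpa using hst 0 (by simp)
      · simpa using hpp 0 (by simp)
    | x::u::r::rest =>
      have hur : u = r := by simpa using hme 0 (by simp)
      subst hur
      have he' : Even (u::rest).length := by
        simp at he ⊢; rcases he with ⟨k, hk⟩; exact ⟨k-1, by omega⟩
      refine GS.cons x u rest ?_ ?_ ?_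
      · refine ih (u::rest) (by simp at hn ⊢; omega) (by simp) he' ?_ ?_ ?_
        · intro i hi
          have := hme (i+1) (by simp at hi ⊢; omega)
          rw [getD_cons₂' x u (u::rest) i 1, getD_cons₂' x u (u::rest) i 2] at this
          exact this
        · intro i hi
          have := hpp (i+1) (by simp at hi ⊢; omega)
          rw [getD_cons₂0 x u (u::rest) i, getD_cons₂' x u (u::rest) i 1] at this
          exact this
        · intro i hi
          have := hst (i+1) (by simp at hi ⊢; omega)
          rw [getD_cons₂0 x u (u::rest) i, getD_cons₂' x u (u::rest) i 1] at this
          exact this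
      · simpa using hst 0 (by simp)
      · simpa using hpp 0 (by simp)

def BInv (C c : List ℕ) : Prop :=
  (C.length = 2 ∧ c = C) ∨ (Fam (lastI C) false 0 c ∧ c.headI = C.headI)

lemma BInv_init {C : List ℕ} (hne : C ≠ []) (he : Even C.length) (hme : MergeEq C)
    (hpp : PairPar C) (hgen : GenericChain C) : BInv C C := by
  rcases hgen with ⟨hlen, _⟩ | ⟨hlen, hst⟩
  · exact Or.inl ⟨hlen, rfl⟩
  · exact Or.inr ⟨(GS_of_block C.length C le_rfl hne he hme hpp hst).fam, rfl⟩

lemma degenAt_length {c : List ℕ} {i : ℕ} (h : 2*i+3 < c.length) :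
    (degenAt c i).length = if (fundDeg (c.getD (2*i) 0) (c.getD (2*i+1) 0)
      (c.getD (2*i+2) 0) (c.getD (2*i+3) 0)).2.2.1 = 0 ∧
      (fundDeg (c.getD (2*i) 0) (c.getD (2*i+1) 0) (c.getD (2*i+2) 0)
        (c.getD (2*i+3) 0)).2.2.2 = 0 then c.length - 2 else c.length := by
  unfold degenAt
  by_cases hdel : (fundDeg (c.getD (2*i) 0) (c.getD (2*i+1) 0) (c.getD (2*i+2) 0)
      (c.getD (2*i+3) 0)).2.2.1 = 0 ∧
      (fundDeg (c.getD (2*i) 0) (c.getD (2*i+1) 0) (c.getD (2*i+2) 0) (c.getD (2*i+3) 0)).2.2.2 = 0 <;>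
    [rw [if_pos hdel, if_pos hdel]; rw [if_neg hdel, if_neg hdel]] <;>
    simp only [List.length_dropLast, List.length_append, List.length_take, List.length_cons,
      List.length_drop, List.length_nil] <;> omega

lemma no_delete_of_length {c : List ℕ} {i : ℕ} (h : 2*i+3 < c.length)
    (hl : (degenAt c i).length = c.length) :
    ¬((fundDeg (c.getD (2*i) 0) (c.getD (2*i+1) 0) (c.getD (2*i+2) 0)
        (c.getD (2*i+3) 0)).2.2.1 = 0 ∧
      (fundDeg (c.getD (2*i) 0) (c.getD (2*i+1) 0) (c.getD (2*i+2) 0)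
        (c.getD (2*i+3) 0)).2.2.2 = 0) := by
  intro hdel
  rw [degenAt_length h, if_pos hdel] at hl
  omega

lemma BInv_step {C c : List ℕ} {i : ℕ} (hB : BInv C c) (hlen : 2*i+3 < c.length)
    (heq : c.getD (2*i+1) 0 = c.getD (2*i+2) 0) :
    BInv C (degenAt c i) ∧ (1 ≤ lastI C → (degenAt c i).length = c.length) := by
  rcases hB with ⟨hl2, rfl⟩ | ⟨hF, hH⟩
  · rw [hl2] at hlen; omega
  · obtain ⟨hF', hH', hL'⟩ := hF.step i hlen heq
    exact ⟨Or.inr ⟨hF', by rw [hH' rfl, hH]⟩, hL'⟩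

lemma NormMem_BInv {C c : List ℕ} (hne : C ≠ []) (he : Even C.length) (hme : MergeEq C)
    (hpp : PairPar C) (hgen : GenericChain C) (h : NormMem C c) : BInv C c := by
  induction h with
  | base => exact BInv_init hne he hme hpp hgen
  | step c i hc hlen heq ih => exact (BInv_step ih hlen heq).1

lemma BInv.ne_nil {C c : List ℕ} (h : BInv C c) : c ≠ [] := by
  rcases h with ⟨hl2, rfl⟩ | ⟨hF, _⟩
  · intro hc; rw [hc] at hl2; simp at hl2
  · exact hF.ne_nil

lemma BInv.even {C c : List ℕ} (h : BInv C c) : Even c.length := by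
  rcases h with ⟨hl2, rfl⟩ | ⟨hF, _⟩
  · rw [hl2]; exact ⟨1, rfl⟩
  · exact hF.length_even

lemma BInv.headI_eq {C c : List ℕ} (h : BInv C c) : c.headI = C.headI := by
  rcases h with ⟨_, rfl⟩ | ⟨_, hH⟩
  · rfl
  · exact hH

lemma BInv.last_ge {C c : List ℕ} (h : BInv C c) : lastI C ≤ lastI c := by
  rcases h with ⟨_, rfl⟩ | ⟨hF, _⟩
  · exact le_rfl
  · exact hF.last_ge'

lemma NormMem_length {C c : List ℕ} (hne : C ≠ []) (he : Even C.length) (hme : MergeEq C)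
    (hpp : PairPar C) (hgen : GenericChain C) (ht : 1 ≤ lastI C) (h : NormMem C c) :
    c.length = C.length := by
  induction h with
  | base => rfl
  | step c i hc hlen heq ih =>
    rw [(BInv_step (NormMem_BInv hne he hme hpp hgen hc) hlen heq).2 ht, ih]

lemma degenAt_append_left : ∀ (m : ℕ) (L c : List ℕ) (i : ℕ), L.length = 2*m →
    2*i+3 < c.length → degenAt (L ++ c) (m + i) = L ++ degenAt c i := by
  intro m
  induction m with
  | zero =>
    intro L c i hL _
    have : L = [] := List.length_eq_zero_iff.mp (by omega)
    subst this; simp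
  | succ m ih =>
    intro L c i hL hi
    match L with
    | x::y::L' =>
      have hL' : L'.length = 2*m := by simp at hL; omega
      rw [show (x::y::L') ++ c = x::y::(L'++c) by simp]
      rw [show m + 1 + i = (m+i)+1 by ring]
      rw [degenAt_cons₂ x y (L'++c) (m+i) (by simp [List.length_append]; omega)]
      rw [ih L' c i hL' hi]; simp
    | [] => simp at hL
    | [x] => simp at hL; omega

lemma degenAt_append_right {c : List ℕ} {i : ℕ} (R : List ℕ) (h : 2*i+3 < c.length)
    (hnd : ¬((fundDeg (c.getD (2*i) 0) (c.getD (2*i+1) 0) (c.getD (2*i+2) 0)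
        (c.getD (2*i+3) 0)).2.2.1 = 0 ∧
      (fundDeg (c.getD (2*i) 0) (c.getD (2*i+1) 0) (c.getD (2*i+2) 0)
        (c.getD (2*i+3) 0)).2.2.2 = 0)) :
    degenAt (c ++ R) i = degenAt c i ++ R := by
  have g0 : (c++R).getD (2*i) 0 = c.getD (2*i) 0 := List.getD_append _ _ _ _ (by omega)
  have g1 : (c++R).getD (2*i+1) 0 = c.getD (2*i+1) 0 := List.getD_append _ _ _ _ (by omega)
  have g2 : (c++R).getD (2*i+2) 0 = c.getD (2*i+2) 0 := List.getD_append _ _ _ _ (by omega)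
  have g3 : (c++R).getD (2*i+3) 0 = c.getD (2*i+3) 0 := List.getD_append _ _ _ _ (by omega)
  unfold degenAt
  rw [g0, g1, g2, g3]
  rw [if_neg hnd, if_neg hnd]
  rw [List.take_append_of_le_length (by omega), List.drop_append_of_le_length (by omega)]
  simp


def BlockOK (C : List ℕ) : Prop :=
  C ≠ [] ∧ Even C.length ∧ MergeEq C ∧ PairPar C ∧ GenericChain C

lemma NormMem_BInv' {C c : List ℕ} (hC : BlockOK C) (h : NormMem C c) : BInv C c :=
  NormMem_BInv hC.1 hC.2.1 hC.2.2.1 hC.2.2.2.1 hC.2.2.2.2 h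

lemma getD_append_mid (L X : List ℕ) (m k : ℕ) (hL : L.length = 2*m) (hk : k < X.length) :
    (L ++ X).getD (2*m+k) 0 = X.getD k 0 := by
  rw [List.getD_append_right _ _ _ _ (by omega)]
  congr 1
  omega

lemma getD_headI {l : List ℕ} (h : l ≠ []) : l.getD 0 0 = l.headI := by
  cases l with
  | nil => exact absurd rfl h
  | cons a l' => rfl

lemma getD_lastI (l : List ℕ) : l.getD (l.length - 1) 0 = lastI l := by
  simp [lastI, List.getLast?_eq_getElem?, List.getD_eq_getElem?_getD]

lemma NormMem_lift {C f : List ℕ} (L R : List ℕ) (m : ℕ) (hL : L.length = 2*m)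
    (hC : BlockOK C) (hR : R ≠ [] → 1 ≤ lastI C) (h : NormMem C f) :
    NormMem (L ++ C ++ R) (L ++ f ++ R) := by
  induction h with
  | base => exact .base
  | step c i hc hlen heq ih =>
    have hB := NormMem_BInv' hC hc
    have hlen2 : 2*(m+i)+3 < (L ++ c ++ R).length := by
      simp [List.length_append]; omega
    have g1 : (L ++ c ++ R).getD (2*(m+i)+1) 0 = c.getD (2*i+1) 0 := by
      rw [List.append_assoc, show 2*(m+i)+1 = 2*m + (2*i+1) by ring,
        getD_append_mid L (c ++ R) m _ hL (by simp [List.length_append]; omega)]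
      exact List.getD_append _ _ _ _ (by omega)
    have g2 : (L ++ c ++ R).getD (2*(m+i)+2) 0 = c.getD (2*i+2) 0 := by
      rw [List.append_assoc, show 2*(m+i)+2 = 2*m + (2*i+2) by ring,
        getD_append_mid L (c ++ R) m _ hL (by simp [List.length_append]; omega)]
      exact List.getD_append _ _ _ _ (by omega)
    have hstep := NormMem.step _ (m+i) ih hlen2 (by rw [g1, g2]; exact heq)
    rcases List.eq_nil_or_concat R with rfl | hRne
    · have : degenAt (L ++ c ++ []) (m+i) = L ++ degenAt c i ++ [] := by
        simp only [List.append_nil]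
        exact degenAt_append_left m L c i hL hlen
      rwa [this] at hstep
    · have hRne' : R ≠ [] := by rcases hRne with ⟨a, b, rfl⟩; simp
      have hnd := no_delete_of_length hlen ((BInv_step hB hlen heq).2 (hR hRne'))
      have : degenAt (L ++ c ++ R) (m+i) = L ++ degenAt c i ++ R := by
        rw [List.append_assoc, degenAt_append_left m L (c ++ R) i hL
          (by simp [List.length_append]; omega), degenAt_append_right R hlen hnd]
        simp
      rwa [this] at hstep

def Bd (X Y : List ℕ) : Prop := Y.headI < lastI X

lemma assemble : ∀ {Bs fs : List (List ℕ)}, List.Forall₂ NormMem Bs fs →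
    ∀ (L : List ℕ) (m : ℕ), L.length = 2*m →
    (∀ B ∈ Bs, BlockOK B) → List.Chain' Bd Bs →
    NormMem (L ++ Bs.flatten) (L ++ fs.flatten) := by
  intro Bs fs hF
  induction hF with
  | nil => intro L m _ _ _; exact .base
  | @cons B f Bs' fs' hBf hrest ih =>
    intro L m hL hok hbd
    have hokB := hok B (by simp)
    have hR : Bs'.flatten ≠ [] → 1 ≤ lastI B := by
      intro hne
      cases Bs' with
      | nil => simp at hne
      | cons B' Bs'' =>
        have : B'.headI < lastI B := (List.isChain_cons_cons.mp hbd).1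
        omega
    have step1 : NormMem (L ++ B ++ Bs'.flatten) (L ++ f ++ Bs'.flatten) :=
      NormMem_lift L Bs'.flatten m hL hokB hR hBf
    -- f and B have even length
    obtain ⟨k, hk⟩ := (NormMem_BInv' hokB hBf).even
    have step2 : NormMem (L ++ f ++ Bs'.flatten) (L ++ f ++ fs'.flatten) := by
      have := ih (L ++ f) (m + k) (by simp [List.length_append]; omega)
        (fun B hB => hok B (by simp [hB])) (List.IsChain.tail hbd)
      simpa [List.append_assoc] using this
    have := step1.trans step2
    simpa [List.append_assoc] using this

lemma members_flatten_ne_nil {Bs fs : List (List ℕ)} (hF : List.Forall₂ NormMem Bs fs)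
    (hok : ∀ B ∈ Bs, BlockOK B) (hne : fs ≠ []) : fs.flatten ≠ [] := by
  cases hF with
  | nil => exact absurd rfl hne
  | @cons B f Bs' fs' hBf hrest =>
    have : f ≠ [] := (NormMem_BInv' (hok B (by simp)) hBf).ne_nil
    cases f with
    | nil => exact absurd rfl this
    | cons a f' => simp

lemma chains_flatten_blocks : ∀ {Bs fs : List (List ℕ)}, List.Forall₂ NormMem Bs fs →
    (∀ B ∈ Bs, BlockOK B) → List.Chain' Bd Bs →
    chains fs.flatten = (fs.map chains).flatten := by
  intro Bs fs hF
  induction hF with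
  | nil => intro _ _; simp
  | @cons B f Bs' fs' hBf hrest ih =>
    intro hok hbd
    have hBI := NormMem_BInv' (hok B (by simp)) hBf
    have hcf : chains (f ++ fs'.flatten) = chains f ++ chains fs'.flatten := by
      refine chains_append f.length f fs'.flatten le_rfl hBI.even hBI.ne_nil ?_
      cases hrest with
      | nil => exact Or.inl rfl
      | @cons B' f' Bs'' fs'' hBf' hrest' =>
        right
        have hne' : f' ≠ [] := (NormMem_BInv' (hok B' (by simp)) hBf').ne_nil
        rw [headI_flatten_cons f' fs'' hne']
        have h1 : f'.headI = B'.headI := (NormMem_BInv' (hok B' (by simp)) hBf').headI_eq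
        have h2 : B'.headI < lastI B := (List.isChain_cons_cons.mp hbd).1
        have h3 : lastI B ≤ lastI f := hBI.last_ge
        omega
    simp only [List.flatten_cons, List.map_cons]
    rw [hcf, ih (fun B hB => hok B (by simp [hB])) (List.IsChain.tail hbd)]

lemma part3_locate : ∀ {Bs fs : List (List ℕ)}, List.Forall₂ NormMem Bs fs →
    (∀ B ∈ Bs, BlockOK B) → List.Chain' Bd Bs →
    ∀ i, 2*i+3 < fs.flatten.length →
    fs.flatten.getD (2*i+1) 0 = fs.flatten.getD (2*i+2) 0 →
    ∃ fs', List.Forall₂ NormMem Bs fs' ∧ degenAt fs.flatten i = fs'.flatten := by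
  intro Bs fs hF
  induction hF with
  | nil => intro _ _ i hlen _; simp at hlen
  | @cons B f Bs' fs' hBf hrest ih =>
    intro hok hbd i hlen heq
    have hBI := NormMem_BInv' (hok B (by simp)) hBf
    obtain ⟨k, hk'⟩ := hBI.even
    have hk : f.length = 2*k := by omega
    simp only [List.flatten_cons] at hlen heq ⊢
    by_cases h1 : 2*i+3 < f.length
    · -- inside first block
      have g1 : (f ++ fs'.flatten).getD (2*i+1) 0 = f.getD (2*i+1) 0 :=
        List.getD_append _ _ _ _ (by omega)
      have g2 : (f ++ fs'.flatten).getD (2*i+2) 0 = f.getD (2*i+2) 0 :=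
        List.getD_append _ _ _ _ (by omega)
      rw [g1, g2] at heq
      have hstep : NormMem B (degenAt f i) := NormMem.step f i hBf h1 heq
      refine ⟨degenAt f i :: fs', List.Forall₂.cons hstep hrest, ?_⟩
      simp only [List.flatten_cons]
      by_cases hfl : fs'.flatten = []
      · rw [hfl]; simp
      · have hne : fs'.flatten ≠ [] := hfl
        have hBs' : Bs' ≠ [] := by
          intro hBs'
          subst hBs'
          cases hrest; simp at hne
        have ht : 1 ≤ lastI B := by
          cases Bs' with
          | nil => exact absurd rfl hBs'
          | cons B' Bs'' => have h9 : B'.headI < lastI B := (List.isChain_cons_cons.mp hbd).1; omega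
        have hnd := no_delete_of_length h1 ((BInv_step hBI h1 heq).2 ht)
        exact degenAt_append_right fs'.flatten h1 hnd
    · by_cases h2 : f.length ≤ 2*i+1
      · -- inside later blocks
        have hik : k ≤ i := by omega
        have e1 : 2*i+1 = 2*k + (2*(i-k)+1) := by omega
        have e2 : 2*i+2 = 2*k + (2*(i-k)+2) := by omega
        have hlen' : 2*(i-k)+3 < fs'.flatten.length := by
          rw [List.length_append] at hlen; omega
        have g1 : (f ++ fs'.flatten).getD (2*i+1) 0 = fs'.flatten.getD (2*(i-k)+1) 0 := by
          rw [e1]; exact getD_append_mid f _ k _ hk (by omega)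
        have g2 : (f ++ fs'.flatten).getD (2*i+2) 0 = fs'.flatten.getD (2*(i-k)+2) 0 := by
          rw [e2]; exact getD_append_mid f _ k _ hk (by omega)
        rw [g1, g2] at heq
        obtain ⟨fs'', hF'', hdeg⟩ := ih (fun B hB => hok B (by simp [hB])) (List.IsChain.tail hbd)
          (i-k) hlen' heq
        refine ⟨f :: fs'', List.Forall₂.cons hBf hF'', ?_⟩
        simp only [List.flatten_cons]
        rw [show i = k + (i-k) by omega, degenAt_append_left k f fs'.flatten (i-k) hk hlen', hdeg]
      · -- straddles the boundary: impossible
        exfalso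
        have hfl : f.length = 2*i+2 := by omega
        have hne : fs'.flatten ≠ [] := by
          intro h
          rw [h] at hlen
          simp at hlen; omega
        have hBs' : Bs' ≠ [] := by
          intro hBs'; subst hBs'; cases hrest; simp at hne
        have g1 : (f ++ fs'.flatten).getD (2*i+1) 0 = lastI f := by
          rw [List.getD_append _ _ _ _ (by omega), show 2*i+1 = f.length - 1 by omega]
          exact getD_lastI f
        have g2 : (f ++ fs'.flatten).getD (2*i+2) 0 = fs'.flatten.headI := by
          rw [show 2*i+2 = 2*(i+1) + 0 by ring, getD_append_mid f _ (i+1) 0 (by omega)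
            (by cases hfle : fs'.flatten; exact absurd hfle hne; simp)]
          exact getD_headI hne
        rw [g1, g2] at heq
        cases hrest with
        | nil => simp at hne
        | @cons B' f' Bs'' fs'' hBf' hrest' =>
          have hne' : f' ≠ [] := (NormMem_BInv' (hok B' (by simp)) hBf').ne_nil
          rw [headI_flatten_cons f' fs'' hne'] at heq
          have h1' : f'.headI = B'.headI := (NormMem_BInv' (hok B' (by simp)) hBf').headI_eq
          have h2' : B'.headI < lastI B := (List.isChain_cons_cons.mp hbd).1
          have h3' : lastI B ≤ lastI f := hBI.last_ge
          omega

lemma part2_inj : ∀ {Bs fs gs : List (List ℕ)}, (∀ B ∈ Bs, BlockOK B) → List.Chain' Bd Bs →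
    List.Forall₂ NormMem Bs fs → List.Forall₂ NormMem Bs gs → fs.flatten = gs.flatten →
    fs = gs := by
  intro Bs
  induction Bs with
  | nil =>
    intro fs gs _ _ hf hg _
    rw [List.forall₂_nil_left_iff.mp hf, List.forall₂_nil_left_iff.mp hg]
  | cons B Bs' ih =>
    intro fs gs hok hbd hf hg hfl
    cases hf with
    | @cons _ f _ fs' hBf hf' =>
      cases hg with
      | @cons _ g _ gs' hBg hg' =>
        cases Bs' with
        | nil =>
          cases hf'; cases hg'
          simp only [List.flatten_cons, List.flatten_nil, List.append_nil] at hfl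
          rw [hfl]
        | cons B' Bs'' =>
          have ht : 1 ≤ lastI B := by
            have h9 : B'.headI < lastI B := (List.isChain_cons_cons.mp hbd).1
            omega
          have hokB := hok B (by simp)
          have hlf : f.length = B.length :=
            NormMem_length hokB.1 hokB.2.1 hokB.2.2.1 hokB.2.2.2.1 hokB.2.2.2.2 ht hBf
          have hlg : g.length = B.length :=
            NormMem_length hokB.1 hokB.2.1 hokB.2.2.1 hokB.2.2.2.1 hokB.2.2.2.2 ht hBg
          simp only [List.flatten_cons] at hfl
          obtain ⟨h1, h2⟩ := List.append_inj hfl (by omega)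
          rw [h1, ih (fun X hX => hok X (by simp [hX])) (List.IsChain.tail hbd) hf' hg' h2]

lemma ncard_prod {α β : Type*} (s : Set α) (t : Set β) :
    (s ×ˢ t).ncard = s.ncard * t.ncard := by
  rw [← Nat.card_coe_set_eq, ← Nat.card_coe_set_eq, ← Nat.card_coe_set_eq,
    Nat.card_congr (Equiv.Set.prod s t), Nat.card_prod]

lemma forall₂_ncard (R : List ℕ → List ℕ → Prop) : ∀ (Bs : List (List ℕ)),
    {fs : List (List ℕ) | List.Forall₂ R Bs fs}.ncard
      = (Bs.map (fun B => {c : List ℕ | R B c}.ncard)).prod := by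
  intro Bs
  induction Bs with
  | nil =>
    have : {fs : List (List ℕ) | List.Forall₂ R [] fs} = {[]} := by
      ext fs; simp [List.forall₂_nil_left_iff]
    rw [this]; simp
  | cons B Bs' ih =>
    have himg : {fs : List (List ℕ) | List.Forall₂ R (B::Bs') fs} =
        (fun p : List ℕ × List (List ℕ) => p.1 :: p.2) ''
          ({c : List ℕ | R B c} ×ˢ {gs : List (List ℕ) | List.Forall₂ R Bs' gs}) := by
      ext fs
      constructor
      · intro h
        rw [Set.mem_setOf_eq] at h
        obtain ⟨c, gs, hc, hgs, rfl⟩ := List.forall₂_cons_left_iff.mp h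
        exact ⟨(c, gs), ⟨hc, hgs⟩, rfl⟩
      · rintro ⟨⟨c, gs⟩, ⟨hc, hgs⟩, rfl⟩
        exact List.Forall₂.cons hc hgs
    rw [himg, Set.ncard_image_of_injOn (by rintro ⟨c, gs⟩ _ ⟨c', gs'⟩ _ hpq; simpa using hpq),
      ncard_prod, ih]
    simp


/-- for a generic type C column sequence `O` with chains
`C_1, …, C_l`, concatenation is a bijection from
`Norm(C_1) × … × Norm(C_l)` onto `Norm(O)`, the chain decomposition of each
member of `Norm(O)` is the concatenation of the chain decompositions of the
factors, and `|Norm(O)| = ∏ᵢ |Norm(Cᵢ)|`. -/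
theorem norm_product_structure (O : List ℕ) (hO : TypeC O) (hg : GenericSeq O) :
    (∀ f : List (List ℕ), List.Forall₂ (fun C P => NormMem C P) (chains O) f →
        NormMem O f.flatten ∧ chains f.flatten = (f.map chains).flatten) ∧
    (∀ f g : List (List ℕ), List.Forall₂ (fun C P => NormMem C P) (chains O) f →
        List.Forall₂ (fun C P => NormMem C P) (chains O) g →
        f.flatten = g.flatten → f = g) ∧
    (∀ Q, NormMem O Q → ∃ f : List (List ℕ),
        List.Forall₂ (fun C P => NormMem C P) (chains O) f ∧ Q = f.flatten) ∧
    {Q : List ℕ | NormMem O Q}.ncard =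
      ((chains O).map fun C => {P : List ℕ | NormMem C P}.ncard).prod := by
  obtain ⟨hev, hsort, hpar⟩ := hO
  have hpp : PairPar O := by
    intro i hi
    have := hpar i hi
    rw [Nat.even_add, Nat.even_iff, Nat.even_iff] at this
    omega
  obtain ⟨hfl, hblk, hbd⟩ := chains_spec O.length O le_rfl hev hsort hpp
  have hok : ∀ B ∈ chains O, BlockOK B := fun B hB =>
    ⟨(hblk B hB).1, (hblk B hB).2.1, (hblk B hB).2.2.1, (hblk B hB).2.2.2, hg B hB⟩
  have hbd' : List.Chain' Bd (chains O) := hbd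
  have part1 : ∀ f : List (List ℕ), List.Forall₂ NormMem (chains O) f →
      NormMem O f.flatten ∧ chains f.flatten = (f.map chains).flatten := by
    intro f hf
    constructor
    · have := assemble hf [] 0 rfl hok hbd'
      simp only [List.nil_append] at this
      rwa [hfl] at this
    · exact chains_flatten_blocks hf hok hbd'
  have part3 : ∀ Q, NormMem O Q → ∃ f : List (List ℕ),
      List.Forall₂ NormMem (chains O) f ∧ Q = f.flatten := by
    intro Q hQ
    induction hQ with
    | base => exact ⟨chains O, List.forall₂_same.mpr (fun x _ => .base), hfl.symm⟩
    | step c i hc hlen heq ihq =>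
      obtain ⟨fs, hF, hQf⟩ := ihq
      subst hQf
      obtain ⟨fs', hF', hdeg⟩ := part3_locate hF hok hbd' i hlen heq
      exact ⟨fs', hF', hdeg⟩
  have part2' : ∀ f g : List (List ℕ), List.Forall₂ NormMem (chains O) f →
      List.Forall₂ NormMem (chains O) g → f.flatten = g.flatten → f = g :=
    fun f g hf hg' hfg => part2_inj hok hbd' hf hg' hfg
  refine ⟨part1, part2', part3, ?_⟩
  have hset : {Q : List ℕ | NormMem O Q} =
      List.flatten '' {fs : List (List ℕ) | List.Forall₂ NormMem (chains O) fs} := by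
    ext Q
    simp only [Set.mem_setOf_eq, Set.mem_image]
    constructor
    · intro hQ
      obtain ⟨f, hF, hQf⟩ := part3 Q hQ
      exact ⟨f, hF, hQf.symm⟩
    · rintro ⟨f, hF, rfl⟩
      exact (part1 f hF).1
  have hinj : Set.InjOn (List.flatten : List (List ℕ) → List ℕ)
      {fs : List (List ℕ) | List.Forall₂ NormMem (chains O) fs} :=
    fun f hf g hg' hfg => part2' f g hf hg' hfg
  rw [hset, Set.ncard_image_of_injOn hinj, forall₂_ncard]
end
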